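/- arXiv:1905.13740 — 4 statements merged into one kernel-verified Lean document; each statement's English description precedes it below -/
import Mathlib

section
/- Let (N, ⊴, c) be an instance of MinBudget and let S be a feasible schedule (a linear extension of ⊴) that minimizes the budget. Define N⁺ = {j : c_j ≥ 0}, N⁻ = {j : c_j < 0}, and the bipartite restriction ⊴₁ = ⊴ ∩ (N⁺ × N⁻). Then the minimum budget over feasible schedules of (N, ⊴, c) equals the minimum budget over feasible schedules of (N, ⊴₁, c). -/
open List

variable {ι : Type*} [DecidableEq ι]

/-- Total cost of a schedule (list of jobs). -/
def listCost (c : ι → ℝ) (S : List ι) : ℝ := (S.map c).sum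

/-- Budget of a schedule: maximum cost of a prefix (the empty prefix has cost 0). -/
def listBudget (c : ι → ℝ) : List ι → ℝ
  | [] => 0
  | j :: t => max 0 (c j + listBudget c t)

/-- Return of a schedule. -/
def listReturn (c : ι → ℝ) (S : List ι) : ℝ := listCost c S - listBudget c S

/-- `S` enumerates the finite job set `N` without repetition. -/
def IsScheduleOf (N : Finset ι) (S : List ι) : Prop :=
  S.Nodup ∧ ∀ j, j ∈ S ↔ j ∈ N

/-- `S` is a linear extension of the precedence relation `r` (restricted to its jobs). -/
def RespectsOrder (r : ι → ι → Prop) (S : List ι) : Prop :=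
  ∀ i j, r i j → i ∈ S → j ∈ S → S.idxOf i ≤ S.idxOf j

/-- Minimum budget over all feasible schedules of the job set `X`. -/
noncomputable def setBudget (r : ι → ι → Prop) (c : ι → ℝ) (X : Finset ι) : ℝ :=
  sInf {b | ∃ S : List ι, IsScheduleOf X S ∧ RespectsOrder r S ∧ listBudget c S = b}

/-- Total cost of a job set. -/
def setCost (c : ι → ℝ) (X : Finset ι) : ℝ := ∑ j ∈ X, c j

/-- Return of a job set. -/
noncomputable def setReturn (r : ι → ι → Prop) (c : ι → ℝ) (X : Finset ι) : ℝ :=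
  setCost c X - setBudget r c X

/-- The cbr-preorder on job sets. -/
def cbrLE (r : ι → ι → Prop) (c : ι → ℝ) (X Y : Finset ι) : Prop :=
  (setCost c X < 0 ∧ 0 ≤ setCost c Y) ∨
  (setCost c X < 0 ∧ setCost c Y < 0 ∧ setBudget r c X < setBudget r c Y) ∨
  (setCost c X < 0 ∧ setCost c Y < 0 ∧ setBudget r c X = setBudget r c Y ∧
    setReturn r c X ≤ setReturn r c Y) ∨
  (0 ≤ setCost c X ∧ 0 ≤ setCost c Y ∧ setReturn r c X ≤ setReturn r c Y)

/-- `J` is an ideal (downward-closed subset) of `r` restricted to `I`. -/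
def IsIdealIn (r : ι → ι → Prop) (I J : Finset ι) : Prop :=
  J ⊆ I ∧ ∀ j ∈ J, ∀ i ∈ I, r i j → i ∈ J

/-- `F` is a filter (upward-closed subset) of `r` restricted to `I`. -/
def IsFilterIn (r : ι → ι → Prop) (I F : Finset ι) : Prop :=
  F ⊆ I ∧ ∀ i ∈ F, ∀ j ∈ I, r i j → j ∈ F

/-- `I` is an interval of `r` on `N`: intersection of an ideal and a filter. -/
def IsIntervalIn (r : ι → ι → Prop) (N I : Finset ι) : Prop :=
  ∃ J F, IsIdealIn r N J ∧ IsFilterIn r N F ∧ I = J ∩ F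

/-- An irreducible interval: every ideal of the restricted order is `⪰` the interval. -/
def IsIrreducibleIn (r : ι → ι → Prop) (c : ι → ℝ) (N I : Finset ι) : Prop :=
  IsIntervalIn r N I ∧ ∀ J, IsIdealIn r I J → cbrLE r c I J

/-- A schedule (given as blocks `SS`) in increasing irreducible structure. -/
def IncIrrStructure (r : ι → ι → Prop) (c : ι → ℝ) (N : Finset ι)
    (SS : List (List ι)) : Prop :=
  IsScheduleOf N SS.flatten ∧ RespectsOrder r SS.flatten ∧
  (∀ S ∈ SS, IsIrreducibleIn r c N S.toFinset ∧ RespectsOrder r S ∧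
    listBudget c S = setBudget r c S.toFinset) ∧
  ∀ i j : Fin SS.length, i < j → cbrLE r c (SS.get i).toFinset (SS.get j).toFinset

set_option linter.unusedSectionVars false
set_option linter.unusedVariables false
set_option maxHeartbeats 4000000

section Core
variable {r : ι → ι → Prop} {c : ι → ℝ}

lemma budget_nonneg (c : ι → ℝ) : ∀ S : List ι, 0 ≤ listBudget c S
  | [] => le_refl 0
  | j :: t => le_max_left 0 _

lemma cost_le_budget (c : ι → ℝ) : ∀ S : List ι, listCost c S ≤ listBudget c S
  | [] => le_refl 0
  | j :: t => by
      have h := cost_le_budget c t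
      simp only [listCost, listBudget, List.map_cons, List.sum_cons] at *
      exact le_max_of_le_right (by linarith)

lemma budget_append (c : ι → ℝ) (A B : List ι) :
    listBudget c (A ++ B) = max (listBudget c A) (listCost c A + listBudget c B) := by
  induction A with
  | nil => simp [listBudget, listCost, max_eq_right (budget_nonneg c B)]
  | cons a t ih =>
      show max 0 (c a + listBudget c (t ++ B)) = _
      rw [ih, ← max_add_add_left, ← max_assoc]
      simp [listBudget, listCost, add_assoc]

lemma budget_move_left {x : ι} (hx : c x ≤ 0) (W Q : List ι) :
    listBudget c (x :: (W ++ Q)) ≤ listBudget c (W ++ x :: Q) := by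
  have hbW := budget_nonneg c W
  have hcW := cost_le_budget c W
  have hbQ := budget_nonneg c Q
  have h1 : listBudget c (x :: (W ++ Q)) =
      max 0 (c x + max (listBudget c W) (listCost c W + listBudget c Q)) := by
    simp only [listBudget, budget_append]
  have h2 : listBudget c (W ++ x :: Q) =
      max (listBudget c W) (listCost c W + max 0 (c x + listBudget c Q)) := by
    simp only [listBudget, budget_append]
  rw [h1, h2]
  have h3 := le_max_right 0 (c x + listBudget c Q)
  have h4 := le_max_left (listBudget c W) (listCost c W + max 0 (c x + listBudget c Q))
  have h5 := le_max_right (listBudget c W) (listCost c W + max 0 (c x + listBudget c Q))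
  apply max_le (by linarith)
  rcases le_total (listBudget c W) (listCost c W + listBudget c Q) with h | h
  · rw [max_eq_right h]; linarith
  · rw [max_eq_left h]; linarith

lemma budget_move_right {x : ι} (hx : 0 ≤ c x) (W Q : List ι) :
    listBudget c (W ++ x :: Q) ≤ listBudget c (x :: (W ++ Q)) := by
  have hbW := budget_nonneg c W
  have hcW := cost_le_budget c W
  have hbQ := budget_nonneg c Q
  have h1 : listBudget c (x :: (W ++ Q)) =
      max 0 (c x + max (listBudget c W) (listCost c W + listBudget c Q)) := by
    simp only [listBudget, budget_append]
  have h2 : listBudget c (W ++ x :: Q) =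
      max (listBudget c W) (listCost c W + max 0 (c x + listBudget c Q)) := by
    simp only [listBudget, budget_append]
  rw [h1, h2]
  have h3 := le_max_left (listBudget c W) (listCost c W + listBudget c Q)
  have h4 := le_max_right (listBudget c W) (listCost c W + listBudget c Q)
  have h5 := le_max_right 0 (c x + max (listBudget c W) (listCost c W + listBudget c Q))
  apply max_le
  · linarith
  · rcases le_total 0 (c x + listBudget c Q) with h | h
    · rw [max_eq_right h]; linarith
    · rw [max_eq_left h]; linarith

open Classical in
noncomputable def invF (r : ι → ι → Prop) (S : List ι) : Finset (ι × ι) :=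
  (S.toFinset ×ˢ S.toFinset).filter
    (fun p => r p.1 p.2 ∧ p.1 ≠ p.2 ∧ S.idxOf p.2 < S.idxOf p.1)

lemma mem_invF {S : List ι} {p : ι × ι} :
    p ∈ invF r S ↔ p.1 ∈ S ∧ p.2 ∈ S ∧ r p.1 p.2 ∧ p.1 ≠ p.2 ∧
      S.idxOf p.2 < S.idxOf p.1 := by
  classical
  simp only [invF, Finset.mem_filter, Finset.mem_product, List.mem_toFinset]
  tauto

lemma mem_invF' {S : List ι} {x y : ι} :
    (x, y) ∈ invF r S ↔ x ∈ S ∧ y ∈ S ∧ r x y ∧ x ≠ y ∧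
      S.idxOf y < S.idxOf x := mem_invF

lemma respects_of_inv_empty {S : List ι} (h : invF r S = ∅) : RespectsOrder r S := by
  intro i j hij hi hj
  by_contra hcon
  push_neg at hcon
  have hne : i ≠ j := by rintro rfl; exact absurd hcon (lt_irrefl _)
  have : (i, j) ∈ invF r S := mem_invF.2 ⟨hi, hj, hij, hne, hcon⟩
  simp [h] at this

lemma respects1_of_subset {S T : List ι}
    (hsub : invF r T ⊆ invF r S)
    (h1 : RespectsOrder (fun i j => r i j ∧ 0 ≤ c i ∧ c j < 0) S)
    (hTS : ∀ z, z ∈ T ↔ z ∈ S) :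
    RespectsOrder (fun i j => r i j ∧ 0 ≤ c i ∧ c j < 0) T := by
  intro i j hij hi hj
  by_contra hcon
  push_neg at hcon
  have hne : i ≠ j := by
    rintro rfl
    exact absurd hij.2.2 (not_lt.2 hij.2.1)
  have hmem : (i, j) ∈ invF r T := mem_invF.2 ⟨hi, hj, hij.1, hne, hcon⟩
  obtain ⟨hiS, hjS, -, -, hlt⟩ := mem_invF.1 (hsub hmem)
  exact absurd (h1 i j hij hiS hjS) (not_le.2 hlt)

lemma step (hr : IsPartialOrder ι r) {S : List ι} (hnd : S.Nodup)
    (h1 : RespectsOrder (fun i j => r i j ∧ 0 ≤ c i ∧ c j < 0) S)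
    (hne : (invF r S).Nonempty) :
    ∃ T : List ι, T.Perm S ∧ invF r T ⊂ invF r S ∧ listBudget c T ≤ listBudget c S := by
  have htrans : ∀ {x y z : ι}, r x y → r y z → r x z :=
    fun hxy hyz => hr.toIsPreorder.toIsTrans.trans _ _ _ hxy hyz
  have hanti : ∀ {x y : ι}, r x y → r y x → x = y :=
    fun hxy hyx => hr.toAntisymm.antisymm _ _ hxy hyx
  obtain ⟨q, hq, hqmin⟩ :=
    Finset.exists_min_image (invF r S) (fun p => S.idxOf p.1 - S.idxOf p.2) hne
  obtain ⟨a, b⟩ := q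
  obtain ⟨haS, hbS, hrab, hne_ab, hba⟩ := mem_invF'.1 hq
  have hqmin' : ∀ x y : ι, (x, y) ∈ invF r S →
      S.idxOf a - S.idxOf b ≤ S.idxOf x - S.idxOf y := fun x y h => hqmin (x, y) h
  clear hqmin
  obtain ⟨P, R, hPR⟩ := List.append_of_mem hbS
  subst hPR
  have hbP : b ∉ P := fun h => (List.disjoint_of_nodup_append hnd) h List.mem_cons_self
  have hidxb : (P ++ b :: R).idxOf b = P.length := by
    rw [List.idxOf_append_of_notMem hbP, List.idxOf_cons_self, Nat.add_zero]
  have haR : a ∈ R := by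
    rcases List.mem_append.1 haS with h | h
    · exfalso
      have heq : (P ++ b :: R).idxOf a = P.idxOf a := List.idxOf_append_of_mem h
      have h2 : P.idxOf a < P.length := List.idxOf_lt_length_iff.2 h
      rw [heq, hidxb] at hba
      omega
    · rcases List.mem_cons.1 h with h | h
      · exact absurd h hne_ab
      · exact h
  obtain ⟨M, Q, hMQ⟩ := List.append_of_mem haR
  subst hMQ
  obtain ⟨hPnd, hrest, hdisjP⟩ := List.nodup_append.1 hnd
  obtain ⟨hbMem, h₂⟩ := List.nodup_cons.1 hrest
  obtain ⟨hMnd, h₃, hdisjM⟩ := List.nodup_append.1 h₂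
  obtain ⟨haQ, hQnd⟩ := List.nodup_cons.1 h₃
  have haP : a ∉ P := fun h => hdisjP a h a (by simp) rfl
  have hMnotP : ∀ z ∈ M, z ∉ P := fun z hz h => hdisjP z h z (by simp [hz]) rfl
  have hQnotP : ∀ z ∈ Q, z ∉ P := fun z hz h => hdisjP z h z (by simp [hz]) rfl
  have hbM : b ∉ M := fun h => hbMem (by simp [h])
  have hbQ : b ∉ Q := fun h => hbMem (by simp [h])
  have haM : a ∉ M := fun h => hdisjM a h a (by simp) rfl
  have hQnotM : ∀ z ∈ Q, z ∉ M := fun z hz h => hdisjM z h z (by simp [hz]) rfl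
  have hPb : ∀ z ∈ P, P.idxOf z < P.length := fun z hz => List.idxOf_lt_length_iff.2 hz
  have hMb : ∀ z ∈ M, M.idxOf z < M.length := fun z hz => List.idxOf_lt_length_iff.2 hz
  -- indices in S
  have hSP : ∀ z ∈ P, (P ++ b :: (M ++ a :: Q)).idxOf z = P.idxOf z :=
    fun z hz => List.idxOf_append_of_mem hz
  have hSb : (P ++ b :: (M ++ a :: Q)).idxOf b = P.length := hidxb
  have hSM : ∀ z ∈ M, (P ++ b :: (M ++ a :: Q)).idxOf z = P.length + 1 + M.idxOf z := by
    intro z hz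
    have hzb : b ≠ z := fun h => hbM (h ▸ hz)
    rw [List.idxOf_append_of_notMem (hMnotP z hz), List.idxOf_cons_ne _ hzb,
      List.idxOf_append_of_mem hz]
    omega
  have hSa : (P ++ b :: (M ++ a :: Q)).idxOf a = P.length + 1 + M.length := by
    have hba' : b ≠ a := fun h => hne_ab h.symm
    rw [List.idxOf_append_of_notMem haP, List.idxOf_cons_ne _ hba',
      List.idxOf_append_of_notMem haM, List.idxOf_cons_self]
    omega
  have hSQ : ∀ z ∈ Q, (P ++ b :: (M ++ a :: Q)).idxOf z
      = P.length + 2 + M.length + Q.idxOf z := by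
    intro z hz
    have hzb : b ≠ z := fun h => hbQ (h ▸ hz)
    have hza : a ≠ z := fun h => haQ (h ▸ hz)
    rw [List.idxOf_append_of_notMem (hQnotP z hz), List.idxOf_cons_ne _ hzb,
      List.idxOf_append_of_notMem (hQnotM z hz), List.idxOf_cons_ne _ hza]
    omega
  have hbaS : (P ++ b :: (M ++ a :: Q)).idxOf b < (P ++ b :: (M ++ a :: Q)).idxOf a := hba
  by_cases hca : c a < 0
  · -- move a to just before b
    refine ⟨P ++ a :: (b :: (M ++ Q)), ?_, ?_, ?_⟩
    · exact List.Perm.append_left P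
        (List.perm_middle (a := a) (l₁ := b :: M) (l₂ := Q)).symm
    · -- strict subset of inversions
      have hTP : ∀ z ∈ P, (P ++ a :: (b :: (M ++ Q))).idxOf z = P.idxOf z :=
        fun z hz => List.idxOf_append_of_mem hz
      have hTa : (P ++ a :: (b :: (M ++ Q))).idxOf a = P.length := by
        rw [List.idxOf_append_of_notMem haP, List.idxOf_cons_self]
        omega
      have hTb : (P ++ a :: (b :: (M ++ Q))).idxOf b = P.length + 1 := by
        rw [List.idxOf_append_of_notMem hbP, List.idxOf_cons_ne _ hne_ab,
          List.idxOf_cons_self]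
      have hTM : ∀ z ∈ M, (P ++ a :: (b :: (M ++ Q))).idxOf z
          = P.length + 2 + M.idxOf z := by
        intro z hz
        have hza : a ≠ z := fun h => haM (h ▸ hz)
        have hzb : b ≠ z := fun h => hbM (h ▸ hz)
        rw [List.idxOf_append_of_notMem (hMnotP z hz), List.idxOf_cons_ne _ hza,
          List.idxOf_cons_ne _ hzb, List.idxOf_append_of_mem hz]
        omega
      have hTQ : ∀ z ∈ Q, (P ++ a :: (b :: (M ++ Q))).idxOf z
          = P.length + 2 + M.length + Q.idxOf z := by
        intro z hz
        have hza : a ≠ z := fun h => haQ (h ▸ hz)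
        have hzb : b ≠ z := fun h => hbQ (h ▸ hz)
        rw [List.idxOf_append_of_notMem (hQnotP z hz), List.idxOf_cons_ne _ hza,
          List.idxOf_cons_ne _ hzb, List.idxOf_append_of_notMem (hQnotM z hz)]
        omega
      have hsub : invF r (P ++ a :: (b :: (M ++ Q))) ⊆ invF r (P ++ b :: (M ++ a :: Q)) := by
        rintro ⟨x, y⟩ hp
        rw [mem_invF'] at hp ⊢
        obtain ⟨hxT, hyT, hrxy, hxyne, hlt⟩ := hp
        have hx5 : x ∈ P ∨ x = a ∨ x = b ∨ x ∈ M ∨ x ∈ Q := by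
          have := hxT; simp only [List.mem_append, List.mem_cons] at this; tauto
        have hy5 : y ∈ P ∨ y = a ∨ y = b ∨ y ∈ M ∨ y ∈ Q := by
          have := hyT; simp only [List.mem_append, List.mem_cons] at this; tauto
        refine ⟨?_, ?_, hrxy, hxyne, ?_⟩
        · simp only [List.mem_append, List.mem_cons]; tauto
        · simp only [List.mem_append, List.mem_cons]; tauto
        · rcases hx5 with hx | rfl | rfl | hx | hx
          · rcases hy5 with hy | rfl | rfl | hy | hy
            · rw [hTP x hx, hTP y hy] at hlt; rw [hSP x hx, hSP y hy]; exact hlt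
            · rw [hTP x hx, hTa] at hlt; have := hPb x hx; omega
            · rw [hTP x hx, hTb] at hlt; have := hPb x hx; omega
            · rw [hTP x hx, hTM y hy] at hlt; have := hPb x hx; omega
            · rw [hTP x hx, hTQ y hy] at hlt; have := hPb x hx; omega
          · rcases hy5 with hy | rfl | rfl | hy | hy
            · rw [hSa, hSP y hy]; have := hPb y hy; omega
            · exact absurd rfl hxyne
            · rw [hTa, hTb] at hlt; omega
            · rw [hTa, hTM y hy] at hlt; omega
            · rw [hTa, hTQ y hy] at hlt; omega
          · rcases hy5 with hy | rfl | rfl | hy | hy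
            · rw [hSb, hSP y hy]; exact hPb y hy
            · exact absurd (hanti hrab hrxy) hne_ab
            · exact absurd rfl hxyne
            · rw [hTb, hTM y hy] at hlt; omega
            · rw [hTb, hTQ y hy] at hlt; omega
          · rcases hy5 with hy | rfl | rfl | hy | hy
            · rw [hSM x hx, hSP y hy]; have := hPb y hy; omega
            · exfalso
              have hrxb : r x b := htrans hrxy hrab
              have hxb : x ≠ b := fun h => hbM (h ▸ hx)
              have hmin := hqmin' x b (mem_invF'.2
                ⟨by simp [hx], by simp, hrxb, hxb, by rw [hSb, hSM x hx]; omega⟩)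
              rw [hSa, hSb, hSM x hx] at hmin
              have := hMb x hx
              omega
            · rw [hSb, hSM x hx]; omega
            · rw [hTM x hx, hTM y hy] at hlt; rw [hSM x hx, hSM y hy]; omega
            · rw [hTM x hx, hTQ y hy] at hlt; have := hMb x hx; omega
          · rcases hy5 with hy | rfl | rfl | hy | hy
            · rw [hSQ x hx, hSP y hy]; have := hPb y hy; omega
            · rw [hSa, hSQ x hx]; omega
            · rw [hSb, hSQ x hx]; omega
            · rw [hSM y hy, hSQ x hx]; have := hMb y hy; omega
            · rw [hTQ x hx, hTQ y hy] at hlt; rw [hSQ x hx, hSQ y hy]; omega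
      refine (Finset.ssubset_iff_of_subset hsub).2 ⟨(a, b), hq, ?_⟩
      intro hmem
      obtain ⟨-, -, -, -, hlt⟩ := mem_invF'.1 hmem
      rw [hTa, hTb] at hlt
      omega
    · -- budget
      have hmv : listBudget c (a :: (b :: (M ++ Q))) ≤ listBudget c (b :: (M ++ a :: Q)) :=
        budget_move_left (le_of_lt hca) (b :: M) Q
      rw [budget_append c P, budget_append c P]
      exact max_le_max le_rfl (add_le_add_right hmv _)
  · -- move b to just after a
    push_neg at hca
    have hcb : 0 ≤ c b := by
      by_contra hcb
      push_neg at hcb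
      have := h1 a b ⟨hrab, hca, hcb⟩ haS hbS
      omega
    refine ⟨P ++ (M ++ a :: b :: Q), ?_, ?_, ?_⟩
    · have e1 : (M ++ [a]) ++ b :: Q = M ++ a :: b :: Q := by simp
      have e2 : (M ++ [a]) ++ Q = M ++ a :: Q := by simp
      have hp1 : (M ++ [a]) ++ b :: Q ~ b :: ((M ++ [a]) ++ Q) := List.perm_middle
      rw [e1, e2] at hp1
      exact List.Perm.append_left P hp1
    · have hTP : ∀ z ∈ P, (P ++ (M ++ a :: b :: Q)).idxOf z = P.idxOf z :=
        fun z hz => List.idxOf_append_of_mem hz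
      have hTM : ∀ z ∈ M, (P ++ (M ++ a :: b :: Q)).idxOf z = P.length + M.idxOf z := by
        intro z hz
        rw [List.idxOf_append_of_notMem (hMnotP z hz), List.idxOf_append_of_mem hz]
      have hTa : (P ++ (M ++ a :: b :: Q)).idxOf a = P.length + M.length := by
        rw [List.idxOf_append_of_notMem haP, List.idxOf_append_of_notMem haM,
          List.idxOf_cons_self]
        omega
      have hTb : (P ++ (M ++ a :: b :: Q)).idxOf b = P.length + M.length + 1 := by
        have hba' : a ≠ b := hne_ab
        rw [List.idxOf_append_of_notMem hbP, List.idxOf_append_of_notMem hbM,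
          List.idxOf_cons_ne _ hba', List.idxOf_cons_self]
        omega
      have hTQ : ∀ z ∈ Q, (P ++ (M ++ a :: b :: Q)).idxOf z
          = P.length + 2 + M.length + Q.idxOf z := by
        intro z hz
        have hza : a ≠ z := fun h => haQ (h ▸ hz)
        have hzb : b ≠ z := fun h => hbQ (h ▸ hz)
        rw [List.idxOf_append_of_notMem (hQnotP z hz),
          List.idxOf_append_of_notMem (hQnotM z hz), List.idxOf_cons_ne _ hza,
          List.idxOf_cons_ne _ hzb]
        omega
      have hsub : invF r (P ++ (M ++ a :: b :: Q)) ⊆ invF r (P ++ b :: (M ++ a :: Q)) := by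
        rintro ⟨x, y⟩ hp
        rw [mem_invF'] at hp ⊢
        obtain ⟨hxT, hyT, hrxy, hxyne, hlt⟩ := hp
        have hx5 : x ∈ P ∨ x = a ∨ x = b ∨ x ∈ M ∨ x ∈ Q := by
          have := hxT; simp only [List.mem_append, List.mem_cons] at this; tauto
        have hy5 : y ∈ P ∨ y = a ∨ y = b ∨ y ∈ M ∨ y ∈ Q := by
          have := hyT; simp only [List.mem_append, List.mem_cons] at this; tauto
        refine ⟨?_, ?_, hrxy, hxyne, ?_⟩
        · simp only [List.mem_append, List.mem_cons]; tauto
        · simp only [List.mem_append, List.mem_cons]; tauto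
        · rcases hx5 with hx | rfl | rfl | hx | hx
          · rcases hy5 with hy | rfl | rfl | hy | hy
            · rw [hTP x hx, hTP y hy] at hlt; rw [hSP x hx, hSP y hy]; exact hlt
            · rw [hTP x hx, hTa] at hlt; have := hPb x hx; omega
            · rw [hTP x hx, hTb] at hlt; have := hPb x hx; omega
            · rw [hTP x hx, hTM y hy] at hlt; have := hPb x hx; omega
            · rw [hTP x hx, hTQ y hy] at hlt; have := hPb x hx; omega
          · rcases hy5 with hy | rfl | rfl | hy | hy
            · rw [hSa, hSP y hy]; have := hPb y hy; omega
            · exact absurd rfl hxyne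
            · rw [hTa, hTb] at hlt; omega
            · rw [hSa, hSM y hy]; have := hMb y hy; omega
            · rw [hTa, hTQ y hy] at hlt; omega
          · rcases hy5 with hy | rfl | rfl | hy | hy
            · rw [hSb, hSP y hy]; exact hPb y hy
            · exact absurd (hanti hrab hrxy) hne_ab
            · exact absurd rfl hxyne
            · exfalso
              have hray : r a y := htrans hrab hrxy
              have hay : a ≠ y := fun h => haM (h ▸ hy)
              have hmin := hqmin' a y (mem_invF'.2
                ⟨by simp, by simp [hy], hray, hay,
                  by rw [hSa, hSM y hy]; have := hMb y hy; omega⟩)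
              rw [hSa, hSb, hSM y hy] at hmin
              have := hMb y hy
              omega
            · rw [hTb, hTQ y hy] at hlt; omega
          · rcases hy5 with hy | rfl | rfl | hy | hy
            · rw [hSM x hx, hSP y hy]; have := hPb y hy; omega
            · rw [hTM x hx, hTa] at hlt; have := hMb x hx; omega
            · rw [hTM x hx, hTb] at hlt; have := hMb x hx; omega
            · rw [hTM x hx, hTM y hy] at hlt; rw [hSM x hx, hSM y hy]; omega
            · rw [hTM x hx, hTQ y hy] at hlt; have := hMb x hx; omega
          · rcases hy5 with hy | rfl | rfl | hy | hy
            · rw [hSQ x hx, hSP y hy]; have := hPb y hy; omega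
            · rw [hSa, hSQ x hx]; omega
            · rw [hSb, hSQ x hx]; omega
            · rw [hSM y hy, hSQ x hx]; have := hMb y hy; omega
            · rw [hTQ x hx, hTQ y hy] at hlt; rw [hSQ x hx, hSQ y hy]; omega
      refine (Finset.ssubset_iff_of_subset hsub).2 ⟨(a, b), hq, ?_⟩
      intro hmem
      obtain ⟨-, -, -, -, hlt⟩ := mem_invF'.1 hmem
      rw [hTa, hTb] at hlt
      omega
    · have e1 : (M ++ [a]) ++ b :: Q = M ++ a :: b :: Q := by simp
      have e2 : (M ++ [a]) ++ Q = M ++ a :: Q := by simp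
      have hmv := budget_move_right (x := b) hcb (M ++ [a]) Q
      rw [e1] at hmv
      have hmv' : listBudget c (M ++ a :: b :: Q) ≤ listBudget c (b :: (M ++ a :: Q)) := by
        have e3 : (b :: ((M ++ [a]) ++ Q) : List ι) = b :: (M ++ a :: Q) := by simp
        rwa [e3] at hmv
      rw [budget_append c P, budget_append c P]
      exact max_le_max le_rfl (add_le_add_right hmv' _)

-- appended to step.lean content for testing
lemma improve (hr : IsPartialOrder ι r) (c : ι → ℝ) :
    ∀ (k : ℕ) (S : List ι), (invF r S).card ≤ k → S.Nodup →
      RespectsOrder (fun i j => r i j ∧ 0 ≤ c i ∧ c j < 0) S →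
      ∃ T : List ι, T.Perm S ∧ RespectsOrder r T ∧ listBudget c T ≤ listBudget c S := by
  intro k
  induction k with
  | zero =>
      intro S hcard hnd h1
      have hempty : invF r S = ∅ := Finset.card_eq_zero.1 (Nat.le_zero.1 hcard)
      exact ⟨S, List.Perm.refl S, respects_of_inv_empty hempty, le_rfl⟩
  | succ k ih =>
      intro S hcard hnd h1
      by_cases h : (invF r S).Nonempty
      · obtain ⟨T, hTS, hss, hb⟩ := step hr hnd h1 h
        have hcard' : (invF r T).card ≤ k := by
          have h2 := Finset.card_lt_card hss
          omega
        have hnd' : T.Nodup := hTS.nodup_iff.2 hnd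
        have h1' := respects1_of_subset hss.subset h1 (fun z => hTS.mem_iff)
        obtain ⟨U, hUT, hUresp, hUb⟩ := ih T hcard' hnd' h1'
        exact ⟨U, hUT.trans hTS, hUresp, hUb.trans hb⟩
      · have hempty : invF r S = ∅ := Finset.not_nonempty_iff_eq_empty.1 h
        exact ⟨S, List.Perm.refl S, respects_of_inv_empty hempty, le_rfl⟩

lemma exists_min_elt (hr : IsPartialOrder ι r) :
    ∀ (n : ℕ) (N : Finset ι), N.card ≤ n → N.Nonempty →
      ∃ m ∈ N, ∀ i ∈ N, r i m → i = m := by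
  classical
  intro n
  induction n with
  | zero =>
      intro N hcard hne
      rw [Nat.le_zero, Finset.card_eq_zero] at hcard
      simp [hcard] at hne
  | succ n ih =>
      intro N hcard hne
      obtain ⟨x, hx⟩ := hne
      by_cases hmin : ∀ i ∈ N, r i x → i = x
      · exact ⟨x, hx, hmin⟩
      · push_neg at hmin
        obtain ⟨i, hiN, hrix, hix⟩ := hmin
        set N' := N.filter (fun y => r y x ∧ y ≠ x) with hN'
        have hiN' : i ∈ N' := by simp [hN', hiN, hrix, hix]
        have hxN' : x ∉ N' := by simp [hN']
        have hsub : N' ⊆ N := Finset.filter_subset _ _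
        have hcard' : N'.card ≤ n := by
          have h1 : N'.card < N.card := Finset.card_lt_card ⟨hsub, fun h => hxN' (h hx)⟩
          omega
        obtain ⟨m, hmN', hmmin⟩ := ih N' hcard' ⟨i, hiN'⟩
        have hmN : m ∈ N := hsub hmN'
        obtain ⟨hrmx, hmx⟩ : r m x ∧ m ≠ x := by
          have := hmN'
          simp [hN'] at this
          exact this.2
        refine ⟨m, hmN, fun z hz hrzm => ?_⟩
        have hrzx : r z x := hr.toIsPreorder.toIsTrans.trans _ _ _ hrzm hrmx
        have hzx : z ≠ x := by
          rintro rfl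
          exact hmx (hr.toAntisymm.antisymm _ _ hrmx hrzm)
        exact hmmin z (by simp [hN', hz, hrzx, hzx]) hrzm

lemma exists_sched (hr : IsPartialOrder ι r) :
    ∀ (n : ℕ) (N : Finset ι), N.card ≤ n →
      ∃ S : List ι, IsScheduleOf N S ∧ RespectsOrder r S := by
  intro n
  induction n with
  | zero =>
      intro N hcard
      rw [Nat.le_zero, Finset.card_eq_zero] at hcard
      subst hcard
      exact ⟨[], ⟨List.nodup_nil, by simp⟩, fun i j _ hi _ => by simp at hi⟩
  | succ n ih =>
      intro N hcard
      rcases N.eq_empty_or_nonempty with rfl | hne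
      · exact ih ∅ (by simp)
      · obtain ⟨m, hmN, hmmin⟩ := exists_min_elt hr N.card N le_rfl hne
        have hcard' : (N.erase m).card ≤ n := by
          rw [Finset.card_erase_of_mem hmN]
          omega
        obtain ⟨S', hS', hR'⟩ := ih (N.erase m) hcard'
        have hmS' : m ∉ S' := fun h => (Finset.mem_erase.1 ((hS'.2 m).1 h)).1 rfl
        refine ⟨m :: S', ⟨List.nodup_cons.2 ⟨hmS', hS'.1⟩, ?_⟩, ?_⟩
        · intro j
          rw [List.mem_cons, hS'.2 j, Finset.mem_erase]
          constructor
          · rintro (rfl | ⟨-, h⟩)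
            · exact hmN
            · exact h
          · intro hj
            by_cases hjm : j = m
            · exact Or.inl hjm
            · exact Or.inr ⟨hjm, hj⟩
        · intro i j hij hi hj
          rcases eq_or_ne i m with rfl | him
          · rw [List.idxOf_cons_self]
            exact Nat.zero_le _
          · have hiS' : i ∈ S' := by
              rcases List.mem_cons.1 hi with h | h
              · exact absurd h him
              · exact h
            have hiN : i ∈ N := (Finset.mem_erase.1 ((hS'.2 i).1 hiS')).2
            have hjm : j ≠ m := by
              rintro rfl
              exact him (hmmin i hiN hij)
            have hjS' : j ∈ S' := by
              rcases List.mem_cons.1 hj with h | h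
              · exact absurd h hjm
              · exact h
            have hmi : m ≠ i := Ne.symm him
            have hmj : m ≠ j := Ne.symm hjm
            rw [List.idxOf_cons_ne _ hmi, List.idxOf_cons_ne _ hmj]
            exact Nat.succ_le_succ (hR' i j hij hiS' hjS')

end Core

theorem bipartite_reduction (r : ι → ι → Prop) (hr : IsPartialOrder ι r)
    (c : ι → ℝ) (N : Finset ι) :
    setBudget r c N = setBudget (fun i j => r i j ∧ 0 ≤ c i ∧ c j < 0) c N := by
  classical
  have hlb : ∀ b ∈ {b | ∃ S : List ι, IsScheduleOf N S ∧
      RespectsOrder (fun i j => r i j ∧ 0 ≤ c i ∧ c j < 0) S ∧ listBudget c S = b},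
      (0:ℝ) ≤ b := by
    rintro b ⟨S, -, -, rfl⟩
    exact budget_nonneg c S
  have hlb' : ∀ b ∈ {b | ∃ S : List ι, IsScheduleOf N S ∧
      RespectsOrder r S ∧ listBudget c S = b}, (0:ℝ) ≤ b := by
    rintro b ⟨S, -, -, rfl⟩
    exact budget_nonneg c S
  obtain ⟨S₀, hS₀sch, hS₀resp⟩ := exists_sched hr N.card N le_rfl
  have hS₀resp1 : RespectsOrder (fun i j => r i j ∧ 0 ≤ c i ∧ c j < 0) S₀ :=
    fun i j h hi hj => hS₀resp i j h.1 hi hj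
  have hne1 : {b | ∃ S : List ι, IsScheduleOf N S ∧
      RespectsOrder (fun i j => r i j ∧ 0 ≤ c i ∧ c j < 0) S ∧ listBudget c S = b}.Nonempty :=
    ⟨listBudget c S₀, S₀, hS₀sch, hS₀resp1, rfl⟩
  have hneR : {b | ∃ S : List ι, IsScheduleOf N S ∧
      RespectsOrder r S ∧ listBudget c S = b}.Nonempty :=
    ⟨listBudget c S₀, S₀, hS₀sch, hS₀resp, rfl⟩
  apply _root_.le_antisymm
  · -- setBudget r ≤ setBudget r1
    apply le_csInf hne1
    rintro b ⟨S, hSsch, hSresp, rfl⟩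
    obtain ⟨T, hperm, hTresp, hTb⟩ :=
      improve hr c (invF r S).card S le_rfl hSsch.1 hSresp
    refine csInf_le_of_le ⟨0, hlb'⟩
      ⟨T, ⟨hperm.nodup_iff.2 hSsch.1, fun j => (hperm.mem_iff).trans (hSsch.2 j)⟩,
        hTresp, rfl⟩ hTb
  · -- setBudget r1 ≤ setBudget r
    apply csInf_le_csInf ⟨0, hlb⟩ hneR
    rintro b ⟨S, hSsch, hSresp, rfl⟩
    exact ⟨S, hSsch, fun i j h hi hj => hSresp i j h.1 hi hj, rfl⟩
end

section
/- Let S1 be a schedule of N feasible for the bipartite order ⊴₁ = ⊴ ∩ (N⁺ × N⁻), and suppose there exist jobs k, l with k scheduled before l in S1 but l ⊴ k (a violated pair), chosen so that the number of jobs strictly between k and l in S1 is minimal, and suppose c_l < 0. Then the schedule S2 obtained from S1 by moving l to the position immediately before k (keeping all other jobs in order) is feasible for ⊴₁, has budget b(S2) ≤ b(S1), and has strictly fewer violated pairs with respect to ⊴ than S1. -/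
open List

variable {ι : Type*} [DecidableEq ι]

open Classical in
/-- Number of pairs scheduled in violation of the partial order `r`. -/
noncomputable def violations (r : ι → ι → Prop) (S : List ι) : ℕ :=
  ((S.toFinset ×ˢ S.toFinset).filter
    (fun p : ι × ι => S.idxOf p.1 < S.idxOf p.2 ∧ r p.2 p.1)).card


section Helpers
variable {ι : Type*} [DecidableEq ι]

lemma listBudget_nonneg (c : ι → ℝ) (S : List ι) : 0 ≤ listBudget c S := by
  cases S with
  | nil => simp [listBudget]
  | cons a t => simp [listBudget]

lemma listBudget_append (c : ι → ℝ) (Y X : List ι) :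
    listBudget c (Y ++ X) = max (listBudget c Y) (listCost c Y + listBudget c X) := by
  induction Y with
  | nil => simp [listBudget, listCost, (listBudget_nonneg c X)]
  | cons a t ih =>
      simp only [List.cons_append, listBudget, listCost, List.map_cons, List.sum_cons]
      rw [ih]
      rw [← max_add_add_left, ← max_assoc]
      rw [listCost]; ring_nf

lemma budget_key (ck cl b1 s1 b2 : ℝ) (hcl : cl < 0) :
    max 0 (cl + max 0 (ck + max b1 (s1 + b2))) ≤ max 0 (ck + max b1 (s1 + max 0 (cl + b2))) := by
  apply max_le (le_max_left _ _)
  rcases le_total (ck + max b1 (s1 + b2)) 0 with h | h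
  · rw [max_eq_left h]
    linarith [le_max_left (0:ℝ) (ck + max b1 (s1 + max 0 (cl + b2)))]
  · rw [max_eq_right h]
    rcases le_total b1 (s1 + b2) with h2 | h2
    · rw [max_eq_right h2]
      have e1 : cl + b2 ≤ max 0 (cl + b2) := le_max_right _ _
      have e2 : s1 + max 0 (cl + b2) ≤ max b1 (s1 + max 0 (cl + b2)) := le_max_right _ _
      have e3 : ck + max b1 (s1 + max 0 (cl + b2)) ≤ max 0 (ck + max b1 (s1 + max 0 (cl + b2))) :=
        le_max_right _ _
      linarith
    · rw [max_eq_left h2]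
      have e2 : (b1:ℝ) ≤ max b1 (s1 + max 0 (cl + b2)) := le_max_left _ _
      have e3 : ck + max b1 (s1 + max 0 (cl + b2)) ≤ max 0 (ck + max b1 (s1 + max 0 (cl + b2))) :=
        le_max_right _ _
      linarith

end Helpers

theorem move_negative_job (r : ι → ι → Prop) (hr : IsPartialOrder ι r)
    (c : ι → ℝ) (N : Finset ι) (A B₁ B₂ : List ι) (k l : ι)
    (S1 : List ι) (hS1 : S1 = A ++ k :: (B₁ ++ l :: B₂))
    (hsched : IsScheduleOf N S1)
    (hfeas : RespectsOrder (fun i j => r i j ∧ 0 ≤ c i ∧ c j < 0) S1)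
    (hviol : r l k) (hcl : c l < 0)
    (hmin : ∀ k' l', k' ∈ S1 → l' ∈ S1 → S1.idxOf k' < S1.idxOf l' → r l' k' →
      B₁.length ≤ (S1.filter
        (fun j => decide (S1.idxOf k' < S1.idxOf j ∧ S1.idxOf j < S1.idxOf l'))).length) :
    RespectsOrder (fun i j => r i j ∧ 0 ≤ c i ∧ c j < 0) (A ++ l :: k :: (B₁ ++ B₂)) ∧
    listBudget c (A ++ l :: k :: (B₁ ++ B₂)) ≤ listBudget c S1 ∧
    violations r (A ++ l :: k :: (B₁ ++ B₂)) < violations r S1 := by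
  subst hS1
  obtain ⟨hndS, hmemN⟩ := hsched
  set S₁ := A ++ k :: (B₁ ++ l :: B₂) with hS1def
  set S₂ := A ++ l :: k :: (B₁ ++ B₂) with hS2def
  -- nodup facts
  obtain ⟨ndA, ndY, dAY⟩ := List.nodup_append.mp hndS
  obtain ⟨hkY, ndZ⟩ := List.nodup_cons.mp ndY
  obtain ⟨ndB1, ndW, dB1W⟩ := List.nodup_append.mp ndZ
  obtain ⟨hlB2, ndB2⟩ := List.nodup_cons.mp ndW
  have hkA : k ∉ A := fun h => dAY _ h _ (by simp) rfl
  have hlA : l ∉ A := fun h => dAY _ h _ (by simp) rfl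
  have hkB1 : k ∉ B₁ := fun h => hkY (by simp [h])
  have hkB2 : k ∉ B₂ := fun h => hkY (by simp [h])
  have hkl : k ≠ l := fun h => hkY (by simp [h])
  have hlB1 : l ∉ B₁ := fun h => dB1W _ h _ (by simp) rfl
  have hA_lt : ∀ a ∈ A, A.idxOf a < A.length := fun a ha => List.idxOf_lt_length_iff.mpr ha
  have hB1_lt : ∀ b ∈ B₁, B₁.idxOf b < B₁.length := fun b hb => List.idxOf_lt_length_iff.mpr hb
  -- index formulas in S₁
  have idx1A : ∀ a ∈ A, S₁.idxOf a = A.idxOf a := fun a ha =>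
    List.idxOf_append_of_mem ha
  have idx1k : S₁.idxOf k = A.length := by
    rw [hS1def, List.idxOf_append_of_notMem hkA, List.idxOf_cons_self]
    omega
  have idx1B1 : ∀ b ∈ B₁, S₁.idxOf b = A.length + 1 + B₁.idxOf b := by
    intro b hb
    have hbA : b ∉ A := fun h => dAY _ h _ (by simp [hb]) rfl
    have hbk : k ≠ b := fun h => hkB1 (h ▸ hb)
    rw [hS1def, List.idxOf_append_of_notMem hbA, List.idxOf_cons_ne _ hbk,
      List.idxOf_append_of_mem hb]
    omega
  have idx1l : S₁.idxOf l = A.length + 1 + B₁.length := by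
    rw [hS1def, List.idxOf_append_of_notMem hlA, List.idxOf_cons_ne _ hkl,
      List.idxOf_append_of_notMem hlB1, List.idxOf_cons_self]
    omega
  have idx1B2 : ∀ b ∈ B₂, S₁.idxOf b = A.length + 2 + B₁.length + B₂.idxOf b := by
    intro b hb
    have hbA : b ∉ A := fun h => dAY _ h _ (by simp [hb]) rfl
    have hbk : k ≠ b := fun h => hkB2 (h ▸ hb)
    have hbB1 : b ∉ B₁ := fun h => dB1W _ h _ (by simp [hb]) rfl
    have hbl : l ≠ b := fun h => hlB2 (h ▸ hb)
    rw [hS1def, List.idxOf_append_of_notMem hbA, List.idxOf_cons_ne _ hbk,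
      List.idxOf_append_of_notMem hbB1, List.idxOf_cons_ne _ hbl]
    omega
  -- index formulas in S₂
  have idx2A : ∀ a ∈ A, S₂.idxOf a = A.idxOf a := fun a ha =>
    List.idxOf_append_of_mem ha
  have idx2l : S₂.idxOf l = A.length := by
    rw [hS2def, List.idxOf_append_of_notMem hlA, List.idxOf_cons_self]
    omega
  have idx2k : S₂.idxOf k = A.length + 1 := by
    rw [hS2def, List.idxOf_append_of_notMem hkA, List.idxOf_cons_ne _ (Ne.symm hkl),
      List.idxOf_cons_self]
  have idx2B1 : ∀ b ∈ B₁, S₂.idxOf b = A.length + 2 + B₁.idxOf b := by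
    intro b hb
    have hbA : b ∉ A := fun h => dAY _ h _ (by simp [hb]) rfl
    have hbk : k ≠ b := fun h => hkB1 (h ▸ hb)
    have hbl : l ≠ b := fun h => hlB1 (h ▸ hb)
    rw [hS2def, List.idxOf_append_of_notMem hbA, List.idxOf_cons_ne _ hbl,
      List.idxOf_cons_ne _ hbk, List.idxOf_append_of_mem hb]
    omega
  have idx2B2 : ∀ b ∈ B₂, S₂.idxOf b = A.length + 2 + B₁.length + B₂.idxOf b := by
    intro b hb
    have hbA : b ∉ A := fun h => dAY _ h _ (by simp [hb]) rfl
    have hbk : k ≠ b := fun h => hkB2 (h ▸ hb)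
    have hbB1 : b ∉ B₁ := fun h => dB1W _ h _ (by simp [hb]) rfl
    have hbl : l ≠ b := fun h => hlB2 (h ▸ hb)
    rw [hS2def, List.idxOf_append_of_notMem hbA, List.idxOf_cons_ne _ hbl,
      List.idxOf_cons_ne _ hbk, List.idxOf_append_of_notMem hbB1]
    omega
  -- classification of members
  have hclass : ∀ x ∈ S₁, x ∈ A ∨ x = k ∨ x ∈ B₁ ∨ x = l ∨ x ∈ B₂ := by
    intro x hx
    rw [hS1def] at hx
    simpa [or_assoc] using hx
  -- index shift description
  have hshift : ∀ x ∈ S₁, x ≠ l →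
      (S₁.idxOf x < A.length ∧ S₂.idxOf x = S₁.idxOf x) ∨
      (A.length ≤ S₁.idxOf x ∧ S₁.idxOf x ≤ A.length + B₁.length ∧
        S₂.idxOf x = S₁.idxOf x + 1) ∨
      (A.length + 2 + B₁.length ≤ S₁.idxOf x ∧ S₂.idxOf x = S₁.idxOf x) := by
    intro x hx hxl
    rcases hclass x hx with h | rfl | h | rfl | h
    · exact Or.inl ⟨by rw [idx1A x h]; exact hA_lt x h, by rw [idx1A x h, idx2A x h]⟩
    · exact Or.inr (Or.inl ⟨by rw [idx1k], by rw [idx1k]; omega, by rw [idx1k, idx2k]⟩)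
    · refine Or.inr (Or.inl ⟨?_, ?_, ?_⟩) <;>
        rw [idx1B1 x h] <;> [omega; skip; rw [idx2B1 x h]] <;>
        first
          | (have := hB1_lt x h; omega)
          | omega
    · exact absurd rfl hxl
    · exact Or.inr (Or.inr ⟨by rw [idx1B2 x h]; omega, by rw [idx1B2 x h, idx2B2 x h]⟩)
  have hkS1 : k ∈ S₁ := by rw [hS1def]; simp
  have hlS1 : l ∈ S₁ := by rw [hS1def]; simp
  -- minimality consequence: no job of B₁ precedes k in the partial order
  have hnoB1 : ∀ i ∈ B₁, ¬ r i k := by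
    intro i hi hik
    have hiS1 : i ∈ S₁ := by rw [hS1def]; simp [hi]
    have hlt : S₁.idxOf k < S₁.idxOf i := by rw [idx1k, idx1B1 i hi]; omega
    have hmin' := hmin k i hkS1 hiS1 hlt hik
    set F := S₁.filter
      (fun j => decide (S₁.idxOf k < S₁.idxOf j ∧ S₁.idxOf j < S₁.idxOf i)) with hF
    have hiI : B₁.idxOf i < B₁.length := hB1_lt i hi
    have hFmem : ∀ x ∈ F, x ∈ B₁ ∧ x ≠ i := by
      intro x hx
      obtain ⟨hxS, hcnd⟩ := List.mem_filter.mp hx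
      have hcnd' : S₁.idxOf k < S₁.idxOf x ∧ S₁.idxOf x < S₁.idxOf i := by
        simpa using hcnd
      rcases hclass x hxS with h | rfl | h | rfl | h
      · have := hA_lt x h
        rw [idx1A x h, idx1k] at hcnd'
        omega
      · omega
      · refine ⟨h, ?_⟩
        rintro rfl
        exact absurd hcnd'.2 (lt_irrefl _)
      · rw [idx1l, idx1B1 i hi] at hcnd'
        omega
      · rw [idx1B2 x h, idx1B1 i hi] at hcnd'
        omega
    have hFnd : F.Nodup := hndS.filter _
    have hiF : i ∈ B₁.toFinset := by simp [hi]
    have hlen : F.length ≤ B₁.length - 1 := by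
      calc F.length = F.toFinset.card := (List.toFinset_card_of_nodup hFnd).symm
        _ ≤ (B₁.toFinset.erase i).card := by
            apply Finset.card_le_card
            intro x hx
            rw [List.mem_toFinset] at hx
            obtain ⟨h1, h2⟩ := hFmem x hx
            exact Finset.mem_erase.mpr ⟨h2, by simp [h1]⟩
        _ = B₁.toFinset.card - 1 := Finset.card_erase_of_mem hiF
        _ = B₁.length - 1 := by rw [List.toFinset_card_of_nodup ndB1]
    have hpos : 0 < B₁.length := List.length_pos_iff.mpr (fun h => by simp [h] at hi)
    omega
  have hnkl : ¬ r k l := fun h => hkl (hr.antisymm k l h hviol)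
  have hperm : S₂.Perm S₁ := by
    rw [hS1def, hS2def]
    exact List.Perm.append_left A
      ((List.Perm.swap k l (B₁ ++ B₂)).trans ((List.perm_middle).symm.cons k))
  refine ⟨?_, ?_, ?_⟩
  · -- feasibility
    intro i j hrij hiS2 hjS2
    obtain ⟨hij, hci, hcj⟩ := hrij
    have hi1 : i ∈ S₁ := hperm.subset hiS2
    have hj1 : j ∈ S₁ := hperm.subset hjS2
    have h1 := hfeas i j ⟨hij, hci, hcj⟩ hi1 hj1
    by_cases hjl : j = l
    · subst hjl
      rcases hclass i hi1 with h | rfl | h | rfl | h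
      · rw [idx2A i h, idx2l]
        exact le_of_lt (hA_lt i h)
      · exact absurd hij hnkl
      · exact absurd (hr.trans i j k hij hviol) (hnoB1 i h)
      · exact le_refl _
      · rw [idx1B2 i h, idx1l] at h1
        omega
    · by_cases hil : i = l
      · subst hil
        rw [idx2l]
        rcases hclass j hj1 with h | rfl | h | h' | h
        · have := hA_lt j h
          rw [idx1l, idx1A j h] at h1
          omega
        · rw [idx2k]; omega
        · rw [idx2B1 j h]; omega
        · exact absurd h' hjl
        · rw [idx2B2 j h]; omega
      · rcases hshift i hi1 hil with h | h | h <;>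
          rcases hshift j hj1 hjl with h' | h' | h' <;> omega
  · -- budget
    have e1 : listBudget c S₁ =
        max (listBudget c A) (listCost c A +
          max 0 (c k + max (listBudget c B₁) (listCost c B₁ +
            max 0 (c l + listBudget c B₂)))) := by
      rw [hS1def, listBudget_append]
      simp only [listBudget, listBudget_append]
    have e2 : listBudget c S₂ =
        max (listBudget c A) (listCost c A +
          max 0 (c l + max 0 (c k + max (listBudget c B₁) (listCost c B₁ +
            listBudget c B₂)))) := by
      rw [hS2def, listBudget_append]
      simp only [listBudget, listBudget_append]
    rw [e1, e2]
    exact max_le_max (le_refl _)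
      (add_le_add_right (budget_key (c k) (c l) (listBudget c B₁) (listCost c B₁)
        (listBudget c B₂) hcl) _)
  · -- violations
    have htf : S₂.toFinset = S₁.toFinset := by
      ext x
      simp [hperm.mem_iff]
    classical
    unfold violations
    apply Finset.card_lt_card
    have hsub : ((S₂.toFinset ×ˢ S₂.toFinset).filter
        (fun p : ι × ι => S₂.idxOf p.1 < S₂.idxOf p.2 ∧ r p.2 p.1)) ⊆
        ((S₁.toFinset ×ˢ S₁.toFinset).filter
        (fun p : ι × ι => S₁.idxOf p.1 < S₁.idxOf p.2 ∧ r p.2 p.1)) := by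
      intro p hp
      obtain ⟨hpmem, hlt2, hrp⟩ := Finset.mem_filter.mp hp
      obtain ⟨x, y⟩ := p
      rw [Finset.mem_product] at hpmem
      have hx1 : x ∈ S₁ := by
        have := hpmem.1; rw [htf, List.mem_toFinset] at this; exact this
      have hy1 : y ∈ S₁ := by
        have := hpmem.2; rw [htf, List.mem_toFinset] at this; exact this
      refine Finset.mem_filter.mpr ⟨Finset.mem_product.mpr
        ⟨by simpa using hx1, by simpa using hy1⟩, ?_, hrp⟩
      show S₁.idxOf x < S₁.idxOf y
      simp only at hlt2 hrp
      by_cases hyl : y = l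
      · rw [hyl] at hlt2
        rw [hyl]
        have hxl : x ≠ l := by
          intro he
          rw [he] at hlt2
          exact absurd hlt2 (lt_irrefl _)
        rcases hshift x hx1 hxl with h | h | h
        · rw [idx1l]; omega
        · rw [idx2l] at hlt2; omega
        · rw [idx2l] at hlt2; omega
      · by_cases hxl : x = l
        · rw [hxl] at hlt2 hrp
          rw [hxl]
          rcases hclass y hy1 with h | rfl | h | h' | h
          · have := hA_lt y h
            rw [idx2l, idx2A y h] at hlt2
            omega
          · exact absurd hrp hnkl
          · exact absurd (hr.trans y l k hrp hviol) (hnoB1 y h)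
          · exact absurd h' hyl
          · rw [idx1l, idx1B2 y h]; omega
        · rcases hshift x hx1 hxl with h | h | h <;>
            rcases hshift y hy1 hyl with h' | h' | h' <;> omega
    refine (Finset.ssubset_iff_of_subset hsub).mpr ⟨(k, l), ?_, ?_⟩
    · refine Finset.mem_filter.mpr ⟨Finset.mem_product.mpr
        ⟨by simpa using hkS1, by simpa using hlS1⟩, ?_, hviol⟩
      show S₁.idxOf k < S₁.idxOf l
      rw [idx1k, idx1l]; omega
    · intro hcon
      have := (Finset.mem_filter.mp hcon).2.1
      simp only at this
      rw [idx2k, idx2l] at this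
      omega
end

section
/- Let I be an irreducible interval of a MinBudget instance (N, ⊴, c). Then every ideal J ⊆ I of ⊴_I with b(J) < b(I) satisfies c(J) ≥ 0. -/
open List

variable {ι : Type*} [DecidableEq ι]

theorem irreducible_small_budget_ideal (r : ι → ι → Prop) (hr : IsPartialOrder ι r)
    (c : ι → ℝ) (N I : Finset ι) (hI : IsIrreducibleIn r c N I) :
    ∀ J, IsIdealIn r I J → setBudget r c J < setBudget r c I → 0 ≤ setCost c J := by
  intro J hJ hb
  rcases hI.2 J hJ with h | h | h | h
  · exact h.2
  · linarith [h.2.2]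
  · linarith [le_of_eq h.2.2.1]
  · exact h.2.1
end

section
/- Every schedule in increasing irreducible structure for a MinBudget instance (N, ⊴, c) is optimal, i.e., its budget equals b(N), the minimum budget over all feasible schedules. -/
open List

variable {ι : Type*} [DecidableEq ι]

set_option linter.unusedSectionVars false
set_option linter.unnecessarySimpa false

namespace IncIrrAux

variable (c : ι → ℝ)

@[simp] lemma listCost_nil : listCost c ([] : List ι) = 0 := rfl

@[simp] lemma listCost_cons (a : ι) (l : List ι) :
    listCost c (a :: l) = c a + listCost c l := by
  simp [listCost]

@[simp] lemma listBudget_nil : listBudget c ([] : List ι) = 0 := rfl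

@[simp] lemma listBudget_cons (a : ι) (l : List ι) :
    listBudget c (a :: l) = max 0 (c a + listBudget c l) := rfl

lemma listCost_append (A B : List ι) :
    listCost c (A ++ B) = listCost c A + listCost c B := by
  simp [listCost]

lemma listBudget_nonneg (l : List ι) : 0 ≤ listBudget c l := by
  cases l with
  | nil => simp
  | cons a t => simp

lemma listBudget_append (A B : List ι) :
    listBudget c (A ++ B) = max (listBudget c A) (listCost c A + listBudget c B) := by
  induction A with
  | nil => simp [max_eq_right (listBudget_nonneg c B)]
  | cons a t ih =>
      simp only [cons_append, listBudget_cons, listCost_cons, ih]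
      rw [← max_add_add_left, ← add_assoc, ← max_assoc]

lemma cost_le_budget (l : List ι) : listCost c l ≤ listBudget c l := by
  induction l with
  | nil => simp
  | cons a t ih =>
      simp only [listCost_cons, listBudget_cons, le_max_iff]
      right; linarith

lemma cost_take_le_budget (l : List ι) (n : ℕ) :
    listCost c (l.take n) ≤ listBudget c l := by
  induction l generalizing n with
  | nil => simp
  | cons a t ih =>
      cases n with
      | zero => simpa using listBudget_nonneg c (a :: t)
      | succ m =>
          simp only [take_succ_cons, listCost_cons, listBudget_cons, le_max_iff]
          right
          have := ih m
          linarith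

lemma exists_budget_eq_cost_take (l : List ι) :
    ∃ n ≤ l.length, listBudget c l = listCost c (l.take n) := by
  induction l with
  | nil => exact ⟨0, by simp, by simp⟩
  | cons a t ih =>
      obtain ⟨n, hn, he⟩ := ih
      rcases le_or_gt (c a + listBudget c t) 0 with h | h
      · exact ⟨0, by simp, by simp [max_eq_left h]⟩
      · refine ⟨n + 1, by simpa using hn, ?_⟩
        have hb : listBudget c (a::t) = c a + listBudget c t := by
          simp [max_eq_right h.le]
        rw [hb, take_succ_cons, listCost_cons, he]

lemma cost_take_add_drop (l : List ι) (n : ℕ) :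
    listCost c (l.take n) + listCost c (l.drop n) = listCost c l := by
  rw [← listCost_append]
  simp

lemma cost_filter_split (p : ι → Bool) (l : List ι) :
    listCost c l = listCost c (l.filter p) + listCost c (l.filter (fun x => !(p x))) := by
  induction l with
  | nil => simp
  | cons a t ih =>
      by_cases h : p a = true
      · simp [filter_cons, h, ih]; ring
      · have h' : p a = false := by simpa using h
        simp [filter_cons, h', ih]; ring

lemma filter_take_ex (p : ι → Bool) (l : List ι) (n : ℕ) :
    ∃ m ≤ l.length, (l.filter p).take n = (l.take m).filter p ∧
      (n < (l.filter p).length → m < l.length) := by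
  induction l generalizing n with
  | nil => exact ⟨0, by simp, by simp, by simp⟩
  | cons a t ih =>
      cases n with
      | zero => exact ⟨0, by simp, by simp, fun _ => by simp⟩
      | succ k =>
          by_cases h : p a = true
          · obtain ⟨m, hm, he, hs⟩ := ih k
            refine ⟨m + 1, by simpa using hm, ?_, ?_⟩
            · simp [filter_cons, h, take_succ_cons, he]
            · intro hlt
              have : k < (t.filter p).length := by
                simp [filter_cons, h] at hlt; omega
              have := hs this
              simpa using this
          · have h' : p a = false := by simpa using h
            obtain ⟨m, hm, he, hs⟩ := ih (k+1)
            refine ⟨m + 1, by simpa using hm, ?_, ?_⟩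
            · simp [filter_cons, h', take_succ_cons, he]
            · intro hlt
              have : k + 1 < (t.filter p).length := by
                simpa [filter_cons, h'] using hlt
              have := hs this
              simpa using this

lemma filter_drop_ex (p : ι → Bool) (l : List ι) (n : ℕ) :
    ∃ m ≤ l.length, (l.filter p).drop n = (l.drop m).filter p ∧
      (0 < n → 0 < (l.filter p).length → 0 < m) := by
  induction l generalizing n with
  | nil => exact ⟨0, by simp, by simp, by simp⟩
  | cons a t ih =>
      cases n with
      | zero => exact ⟨0, by simp, by simp, by omega⟩
      | succ k =>
          by_cases h : p a = true
          · obtain ⟨m, hm, he, _⟩ := ih k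
            refine ⟨m + 1, by simpa using hm, ?_, by omega⟩
            simp [filter_cons, h, he]
          · have h' : p a = false := by simpa using h
            obtain ⟨m, hm, he, _⟩ := ih (k+1)
            refine ⟨m + 1, by simpa using hm, ?_, by omega⟩
            simp [filter_cons, h', he]

-- ===== Part B : order / schedule lemmas =====

lemma mem_take_iff_indexOf {l : List ι} (hl : l.Nodup) {x : ι} (hx : x ∈ l) (n : ℕ) :
    x ∈ l.take n ↔ l.idxOf x < n := by
  constructor
  · intro h
    obtain ⟨i, hi, hg⟩ := List.mem_iff_getElem.mp h
    have hi2 : i < l.length := lt_of_lt_of_le hi (by simp [List.length_take])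
    have hgx : l[i] = x := by rw [← hg]; exact List.getElem_take.symm
    have hidx : l.idxOf x = i := by rw [← hgx]; exact List.Nodup.idxOf_getElem hl i hi2
    have hin : i < n := lt_of_lt_of_le hi (by simp [List.length_take])
    omega
  · intro h
    have hlt : l.idxOf x < l.length := List.idxOf_lt_length_iff.mpr hx
    refine List.mem_iff_getElem.mpr ⟨l.idxOf x, ?_, ?_⟩
    · simp [List.length_take]; omega
    · rw [List.getElem_take]; exact List.getElem_idxOf hlt

lemma mem_drop_iff_indexOf {l : List ι} (hl : l.Nodup) {x : ι} (hx : x ∈ l) (n : ℕ) :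
    x ∈ l.drop n ↔ n ≤ l.idxOf x := by
  constructor
  · intro h
    obtain ⟨i, hi, hg⟩ := List.mem_iff_getElem.mp h
    have hi2 : n + i < l.length := by
      have := hi; simp [List.length_drop] at this; omega
    have hgx : l[n + i] = x := by rw [← hg]; exact List.getElem_drop.symm
    have hidx : l.idxOf x = n + i := by rw [← hgx]; exact List.Nodup.idxOf_getElem hl _ hi2
    omega
  · intro h
    have hlt : l.idxOf x < l.length := List.idxOf_lt_length_iff.mpr hx
    refine List.mem_iff_getElem.mpr ⟨l.idxOf x - n, ?_, ?_⟩
    · simp [List.length_drop]; omega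
    · rw [List.getElem_drop]
      have h2 : n + (l.idxOf x - n) = l.idxOf x := by omega
      simp only [h2]
      exact List.getElem_idxOf hlt

variable {r : ι → ι → Prop}

lemma respects_iff_pairwise {S : List ι} (hnd : S.Nodup) :
    RespectsOrder r S ↔ S.Pairwise (fun a b => r b a → b = a) := by
  constructor
  · intro h
    rw [List.pairwise_iff_getElem]
    intro i j hi hj hij
    intro hr'
    have h1 : S.idxOf S[j] ≤ S.idxOf S[i] :=
      h S[j] S[i] hr' (List.getElem_mem _) (List.getElem_mem _)
    rw [List.Nodup.idxOf_getElem hnd i hi, List.Nodup.idxOf_getElem hnd j hj] at h1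
    omega
  · intro h i j hrij hi hj
    by_contra hlt
    push_neg at hlt
    have hjlt : S.idxOf j < S.length := List.idxOf_lt_length_iff.mpr hj
    have hilt : S.idxOf i < S.length := List.idxOf_lt_length_iff.mpr hi
    have := (List.pairwise_iff_getElem.mp h) (S.idxOf j) (S.idxOf i) hjlt hilt hlt
    rw [List.getElem_idxOf hjlt, List.getElem_idxOf hilt] at this
    have heq : i = j := this hrij
    subst heq
    omega

lemma respects_sublist {S T : List ι} (hsub : S <+ T) (hnd : T.Nodup)
    (h : RespectsOrder r T) : RespectsOrder r S :=
  (respects_iff_pairwise (hsub.nodup hnd)).mpr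
    (((respects_iff_pairwise hnd).mp h).sublist hsub)

lemma listCost_eq_setCost (c : ι → ℝ) {L : List ι} (h : L.Nodup) :
    listCost c L = setCost c L.toFinset := by
  induction L with
  | nil => simp [setCost]
  | cons a t ih =>
      have hat : a ∉ t := (List.nodup_cons.mp h).1
      have hnd' : t.Nodup := (List.nodup_cons.mp h).2
      rw [listCost_cons, List.toFinset_cons, setCost, Finset.sum_insert (by simpa using hat)]
      rw [ih hnd']; rfl

-- ===== Part C : setBudget facts =====

variable (r) in
def budgetsOf (c : ι → ℝ) (X : Finset ι) : Set ℝ :=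
  {b | ∃ S : List ι, IsScheduleOf X S ∧ RespectsOrder r S ∧ listBudget c S = b}

lemma setBudget_def (c : ι → ℝ) (X : Finset ι) :
    setBudget r c X = sInf (budgetsOf r c X) := rfl

lemma budgetsOf_bddBelow (c : ι → ℝ) (X : Finset ι) : BddBelow (budgetsOf r c X) := by
  refine ⟨0, ?_⟩
  rintro b ⟨S, _, _, rfl⟩
  exact listBudget_nonneg c S

lemma setBudget_le (c : ι → ℝ) {X : Finset ι} {S : List ι}
    (h1 : IsScheduleOf X S) (h2 : RespectsOrder r S) :
    setBudget r c X ≤ listBudget c S :=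
  csInf_le (budgetsOf_bddBelow c X) ⟨S, h1, h2, rfl⟩

lemma exists_min_elt (hr : IsPartialOrder ι r) (X : Finset ι) (hX : X.Nonempty) :
    ∃ m ∈ X, ∀ y ∈ X, r y m → y = m := by
  classical
  induction X using Finset.strongInductionOn with
  | _ X ih =>
    obtain ⟨x, hx⟩ := hX
    by_cases h : ∃ y ∈ X, r y x ∧ y ≠ x
    · obtain ⟨y, hy, hryx, hne⟩ := h
      set Y := X.filter (fun z => r z x ∧ z ≠ x) with hY
      have hYss : Y ⊂ X := by
        refine ⟨Finset.filter_subset _ _, fun hsub => ?_⟩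
        have := hsub hx
        simp [hY] at this
      have hYne : Y.Nonempty := ⟨y, by simp [hY, hy, hryx, hne]⟩
      obtain ⟨m, hmY, hmin⟩ := ih Y hYss hYne
      have hm : m ∈ X ∧ r m x ∧ m ≠ x := by simpa [hY] using hmY
      refine ⟨m, hm.1, ?_⟩
      intro z hz hrzm
      by_cases hzx : z = x
      · subst hzx
        exact absurd (hr.toAntisymm.antisymm _ _ hm.2.1 hrzm) hm.2.2
      · have hzY : z ∈ Y := by
          simp only [hY, Finset.mem_filter]
          exact ⟨hz, hr.toIsPreorder.toIsTrans.trans _ _ _ hrzm hm.2.1, hzx⟩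
        exact hmin z hzY hrzm
    · push_neg at h
      exact ⟨x, hx, fun y hy hryx => h y hy hryx⟩

lemma exists_feasible (hr : IsPartialOrder ι r) (X : Finset ι) :
    ∃ S, IsScheduleOf X S ∧ RespectsOrder r S := by
  classical
  induction X using Finset.strongInductionOn with
  | _ X ih =>
    rcases X.eq_empty_or_nonempty with rfl | hX
    · refine ⟨[], ⟨List.nodup_nil, by simp⟩, ?_⟩
      intro i j _ hi _; simp at hi
    · obtain ⟨m, hm, hmin⟩ := exists_min_elt hr X hX
      obtain ⟨S, ⟨hnd, hmem⟩, hro⟩ := ih (X.erase m) (Finset.erase_ssubset hm)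
      have hmS : m ∉ S := by
        intro hc
        have := (hmem m).mp hc
        simp at this
      have hndc : (m :: S).Nodup := List.nodup_cons.mpr ⟨hmS, hnd⟩
      refine ⟨m :: S, ⟨hndc, ?_⟩, ?_⟩
      · intro j
        simp only [List.mem_cons, hmem, Finset.mem_erase]
        constructor
        · rintro (rfl | ⟨_, hj⟩) <;> [exact hm; assumption]
        · intro hj
          by_cases hjm : j = m
          · exact Or.inl hjm
          · exact Or.inr ⟨hjm, hj⟩
      · rw [respects_iff_pairwise hndc]
        rw [List.pairwise_cons]
        constructor
        · intro b hb hrbm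
          exact hmin b (Finset.erase_subset _ _ ((hmem b).mp hb)) hrbm
        · exact (respects_iff_pairwise hnd).mp hro

lemma budgetsOf_nonempty (hr : IsPartialOrder ι r) (c : ι → ℝ) (X : Finset ι) :
    (budgetsOf r c X).Nonempty := by
  obtain ⟨S, h1, h2⟩ := exists_feasible hr X
  exact ⟨listBudget c S, S, h1, h2, rfl⟩

lemma setBudget_nonneg (hr : IsPartialOrder ι r) (c : ι → ℝ) (X : Finset ι) :
    0 ≤ setBudget r c X := by
  rw [setBudget_def]
  refine le_csInf (budgetsOf_nonempty hr c X) ?_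
  rintro b ⟨S, _, _, rfl⟩
  exact listBudget_nonneg c S

lemma budgetsOf_finite (c : ι → ℝ) (X : Finset ι) : (budgetsOf r c X).Finite := by
  have hsub : budgetsOf r c X ⊆ (listBudget c) '' {S | S ∈ X.toList.permutations} := by
    rintro b ⟨S, ⟨hnd, hmem⟩, _, rfl⟩
    refine ⟨S, ?_, rfl⟩
    simp only [Set.mem_setOf_eq, List.mem_permutations]
    exact (List.perm_ext_iff_of_nodup hnd X.nodup_toList).mpr
      (fun a => by rw [hmem a, Finset.mem_toList])
  exact ((X.toList.permutations.finite_toSet).image _).subset hsub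

lemma exists_optimal (hr : IsPartialOrder ι r) (c : ι → ℝ) (X : Finset ι) :
    ∃ S, IsScheduleOf X S ∧ RespectsOrder r S ∧ listBudget c S = setBudget r c X := by
  have := (budgetsOf_nonempty hr c X).csInf_mem (budgetsOf_finite c X)
  obtain ⟨S, h1, h2, h3⟩ := this
  exact ⟨S, h1, h2, h3⟩

-- feasibility of filtered lists
lemma schedule_of_filter {X : Finset ι} {T : List ι} (h : IsScheduleOf X T)
    (Q : Finset ι) (hQ : Q ⊆ X) :
    IsScheduleOf Q (T.filter (· ∈ Q)) := by
  refine ⟨h.1.filter _, ?_⟩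
  intro j
  simp only [List.mem_filter, decide_eq_true_eq, h.2 j]
  constructor
  · exact fun hj => hj.2
  · exact fun hj => ⟨hQ hj, hj⟩

lemma schedule_toFinset {L : List ι} (hnd : L.Nodup) :
    IsScheduleOf L.toFinset L :=
  ⟨hnd, fun j => by simp⟩

-- chunks of prefixes are ideals
lemma chunk_ideal {T : List ι} (hnd : T.Nodup) (hro : RespectsOrder r T) (I : Finset ι)
    (hdc : ∀ y ∈ T, ∀ x ∈ I, r x y → x ∈ T) (n : ℕ) :
    IsIdealIn r I ((T.take n).filter (· ∈ I)).toFinset := by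
  constructor
  · intro x hx
    simp only [List.mem_toFinset, List.mem_filter, decide_eq_true_eq] at hx
    exact hx.2
  · intro q hq i hi hriq
    simp only [List.mem_toFinset, List.mem_filter, decide_eq_true_eq] at hq ⊢
    obtain ⟨hqtk, hqI⟩ := hq
    have hqT : q ∈ T := (List.take_sublist n T).mem hqtk
    have hiT : i ∈ T := hdc q hqT i hi hriq
    have hidx : T.idxOf i ≤ T.idxOf q := hro i q hriq hiT hqT
    have hqlt : T.idxOf q < n := (mem_take_iff_indexOf hnd hqT n).mp hqtk
    exact ⟨(mem_take_iff_indexOf hnd hiT n).mpr (lt_of_le_of_lt hidx hqlt), hi⟩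

-- chunks of suffixes are filters
lemma chunk_filter {T : List ι} (hnd : T.Nodup) (hro : RespectsOrder r T) (I : Finset ι)
    (hup : ∀ y ∈ T, ∀ x ∈ I, r y x → x ∈ T) (n : ℕ) :
    IsFilterIn r I ((T.drop n).filter (· ∈ I)).toFinset := by
  constructor
  · intro x hx
    simp only [List.mem_toFinset, List.mem_filter, decide_eq_true_eq] at hx
    exact hx.2
  · intro f hf j hj hrfj
    simp only [List.mem_toFinset, List.mem_filter, decide_eq_true_eq] at hf ⊢
    obtain ⟨hfdr, hfI⟩ := hf
    have hfT : f ∈ T := (List.drop_sublist n T).mem hfdr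
    have hjT : j ∈ T := hup f hfT j hj hrfj
    have hidx : T.idxOf f ≤ T.idxOf j := hro f j hrfj hfT hjT
    have hfge : n ≤ T.idxOf f := (mem_drop_iff_indexOf hnd hfT n).mp hfdr
    exact ⟨(mem_drop_iff_indexOf hnd hjT n).mpr (le_trans hfge hidx), hj⟩

-- ===== Part D : structural claims =====

variable {c : ι → ℝ}

/-- union of ideals is an ideal -/
lemma ideal_union {I A B : Finset ι} (hA : IsIdealIn r I A) (hB : IsIdealIn r I B) :
    IsIdealIn r I (A ∪ B) := by
  constructor
  · intro x hx
    rcases Finset.mem_union.mp hx with h | h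
    · exact hA.1 h
    · exact hB.1 h
  · intro j hj i hi hrij
    rcases Finset.mem_union.mp hj with h | h
    · exact Finset.mem_union_left _ (hA.2 j h i hi hrij)
    · exact Finset.mem_union_right _ (hB.2 j h i hi hrij)

/-- complement of a filter is an ideal -/
lemma ideal_compl_filter {I F : Finset ι} (hF : IsFilterIn r I F) :
    IsIdealIn r I (I \ F) := by
  constructor
  · exact Finset.sdiff_subset
  · intro j hj i hi hrij
    rw [Finset.mem_sdiff] at hj ⊢
    refine ⟨hi, fun hiF => hj.2 (hF.2 i hiF j hj.1 hrij)⟩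

lemma P1 {I : Finset ι} (hirr : ∀ J, IsIdealIn r I J → cbrLE r c I J)
    (hcI : 0 ≤ setCost c I) {Q : Finset ι} (hQ : IsIdealIn r I Q) : 0 ≤ setCost c Q := by
  rcases hirr Q hQ with h | h | h | h
  · linarith [h.1]
  · linarith [h.1]
  · linarith [h.1]
  · exact h.2.1

lemma N1 (hr : IsPartialOrder ι r) {I : Finset ι}
    (hirr : ∀ J, IsIdealIn r I J → cbrLE r c I J)
    (hcI : setCost c I < 0) {Q : Finset ι} (hQ : IsIdealIn r I Q) :
    setCost c I ≤ setCost c Q := by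
  classical
  set s := I.powerset.filter (fun J => IsIdealIn r I J) with hs
  have hmemE : (∅ : Finset ι) ∈ s := by
    simp only [hs, Finset.mem_filter, Finset.mem_powerset]
    exact ⟨Finset.empty_subset I, Finset.empty_subset I, by simp⟩
  obtain ⟨A, hAs, hAmin⟩ := s.exists_min_image (setCost c) ⟨∅, hmemE⟩
  have hAI : IsIdealIn r I A := (Finset.mem_filter.mp hAs).2
  suffices h : setCost c I ≤ setCost c A by
    refine le_trans h (hAmin Q ?_)
    simp only [hs, Finset.mem_filter, Finset.mem_powerset]
    exact ⟨hQ.1, hQ⟩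
  by_contra hlt
  push_neg at hlt
  rcases hirr A hAI with h | h | h | h
  · linarith [h.2]
  · -- case 2 : setBudget I < setBudget A
    obtain ⟨hcI', hcA', hbIA⟩ := h
    obtain ⟨U, hU1, hU2, hU3⟩ := exists_optimal hr c I
    set W := U.filter (· ∈ A) with hW
    have hWsched : IsScheduleOf A W := schedule_of_filter hU1 A hAI.1
    have hWresp : RespectsOrder r W := respects_sublist List.filter_sublist hU1.1 hU2
    have hWb : setBudget r c A ≤ listBudget c W := setBudget_le c hWsched hWresp
    obtain ⟨n, hn, hWn⟩ := exists_budget_eq_cost_take c W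
    obtain ⟨m, hm, hEX, _⟩ := filter_take_ex (fun x => decide (x ∈ A)) U n
    set P := U.take m with hP
    have hPcost : listCost c P ≤ setBudget r c I := by
      rw [← hU3]; exact cost_take_le_budget c U m
    have hPA : listCost c (P.filter (· ∈ A)) = listBudget c W := by
      rw [hWn, hW, hEX]
    -- P.toFinset is an ideal of I
    have hPideal : IsIdealIn r I P.toFinset := by
      have h1 := chunk_ideal hU1.1 hU2 I
        (fun y _ x hx _ => (hU1.2 x).mpr hx) m
      have h2 : (U.take m).filter (· ∈ I) = U.take m := by
        rw [List.filter_eq_self]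
        intro a ha
        simp only [decide_eq_true_eq]
        exact (hU1.2 a).mp ((List.take_sublist m U).mem ha)
      rwa [h2] at h1
    have hA'ideal : IsIdealIn r I (A ∪ P.toFinset) := ideal_union hAI hPideal
    have hPnd : P.Nodup := (List.take_sublist m U).nodup hU1.1
    -- cost of A ∪ P
    have hsplitP := cost_filter_split c (fun x => decide (x ∈ A)) P
    have hPdiff : (P.filter (fun x => !decide (x ∈ A))).toFinset = P.toFinset \ A := by
      ext x
      simp [List.mem_filter]
    have hcostdiff : setCost c (P.toFinset \ A) =
        listCost c P - listCost c (P.filter (· ∈ A)) := by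
      rw [← hPdiff, ← listCost_eq_setCost c (hPnd.filter _)]
      linarith [hsplitP]
    have hcostA' : setCost c (A ∪ P.toFinset) = setCost c A + setCost c (P.toFinset \ A) := by
      rw [← Finset.union_sdiff_self_eq_union, setCost, setCost, setCost,
        Finset.sum_union Finset.sdiff_disjoint.symm]
    have hlt2 : setCost c (A ∪ P.toFinset) < setCost c A := by
      rw [hcostA', hcostdiff]
      have : setBudget r c A ≤ listCost c (P.filter (· ∈ A)) := le_of_le_of_eq hWb hPA.symm
      linarith
    have : A ∪ P.toFinset ∈ s := by
      simp only [hs, Finset.mem_filter, Finset.mem_powerset]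
      exact ⟨hA'ideal.1, hA'ideal⟩
    linarith [hAmin _ this]
  · obtain ⟨_, _, hbeq, hret⟩ := h
    simp only [setReturn] at hret
    linarith
  · linarith [h.1]

lemma F1 (hr : IsPartialOrder ι r) {I : Finset ι}
    (hirr : ∀ J, IsIdealIn r I J → cbrLE r c I J)
    (hcI : 0 ≤ setCost c I) {F : Finset ι} (hF : IsFilterIn r I F)
    (hcF : 0 < setCost c F) :
    setCost c F - setBudget r c F ≤ setCost c I - setBudget r c I := by
  classical
  set Q := I \ F with hQdef
  have hQ : IsIdealIn r I Q := ideal_compl_filter hF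
  have hrQ : setReturn r c I ≤ setReturn r c Q := by
    rcases hirr Q hQ with h | h | h | h
    · linarith [h.1]
    · linarith [h.1]
    · linarith [h.1]
    · exact h.2.2
  obtain ⟨UQ, hUQ1, hUQ2, hUQ3⟩ := exists_optimal hr c Q
  obtain ⟨UF, hUF1, hUF2, hUF3⟩ := exists_optimal hr c F
  have hdisjQF : ∀ x, x ∈ UQ → x ∉ UF := by
    intro x hxQ hxF
    have h1 := (hUQ1.2 x).mp hxQ
    have h2 := (hUF1.2 x).mp hxF
    rw [hQdef, Finset.mem_sdiff] at h1
    exact h1.2 h2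
  have hsched : IsScheduleOf I (UQ ++ UF) := by
    constructor
    · rw [List.nodup_append']
      exact ⟨hUQ1.1, hUF1.1, fun ⦃x⦄ hx hx' => hdisjQF x hx hx'⟩
    · intro j
      simp only [List.mem_append, hUQ1.2 j, hUF1.2 j, hQdef, Finset.mem_sdiff]
      constructor
      · rintro (⟨h1, _⟩ | h1)
        · exact h1
        · exact hF.1 h1
      · intro hj
        by_cases hjf : j ∈ F
        · exact Or.inr hjf
        · exact Or.inl ⟨hj, hjf⟩
  have hresp : RespectsOrder r (UQ ++ UF) := by
    rw [respects_iff_pairwise hsched.1, List.pairwise_append]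
    refine ⟨(respects_iff_pairwise hUQ1.1).mp hUQ2,
      (respects_iff_pairwise hUF1.1).mp hUF2, ?_⟩
    intro a ha b hb hrba
    exfalso
    have haQ := (hUQ1.2 a).mp ha
    have hbF := (hUF1.2 b).mp hb
    have haI : a ∈ I := (ideal_compl_filter hF).1 haQ
    have : a ∈ F := hF.2 b hbF a haI hrba
    rw [hQdef, Finset.mem_sdiff] at haQ
    exact haQ.2 this
  have hble : setBudget r c I ≤ max (setBudget r c Q) (setCost c Q + setBudget r c F) := by
    have h1 := setBudget_le c hsched hresp
    rw [listBudget_append] at h1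
    rw [hUQ3, hUF3] at h1
    have hcQ : listCost c UQ = setCost c Q := by
      rw [listCost_eq_setCost c hUQ1.1]
      congr 1
      ext x
      rw [List.mem_toFinset, hUQ1.2 x]
    rwa [hcQ] at h1
  have hcsplit : setCost c I = setCost c Q + setCost c F := by
    rw [hQdef, setCost, setCost, setCost, ← Finset.sum_sdiff hF.1]
  simp only [setReturn] at hrQ
  rcases le_max_iff.mp hble with h | h
  · linarith
  · linarith

/-- find a block whose chunk has the bad cost property -/
lemma find_block (P : ℝ → Prop) (hP0 : ¬ P 0)
    (hPadd : ∀ x y : ℝ, P (x + y) → P x ∨ P y) :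
    ∀ (bs : List (Finset ι)) (L : List ι),
    (∀ I ∈ bs, ∀ I' ∈ bs, I = I' ∨ Disjoint (I : Finset ι) I') →
    (∀ x ∈ L, ∃ I ∈ bs, x ∈ I) → P (listCost c L) →
    ∃ I ∈ bs, P (listCost c (L.filter (· ∈ I))) := by
  intro bs
  induction bs with
  | nil =>
      intro L _ hmem hbad
      exfalso
      cases L with
      | nil => exact hP0 (by simpa using hbad)
      | cons a t =>
          obtain ⟨I, hI, _⟩ := hmem a (by simp)
          simp at hI
  | cons I bs' ih =>
      intro L hdisj hmem hbad
      by_cases h : P (listCost c (L.filter (· ∈ I)))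
      · exact ⟨I, by simp, h⟩
      · have hsplit := cost_filter_split c (fun x => decide (x ∈ I)) L
        have hbad' : P (listCost c (L.filter (fun x => !decide (x ∈ I)))) := by
          rw [hsplit] at hbad
          rcases hPadd _ _ hbad with h' | h'
          · exact absurd h' h
          · exact h'
        set L' := L.filter (fun x => !decide (x ∈ I)) with hL'
        have hmem' : ∀ x ∈ L', ∃ I' ∈ bs', x ∈ I' := by
          intro x hx
          rw [hL', List.mem_filter] at hx
          obtain ⟨hxL, hxnI⟩ := hx
          simp only [Bool.not_eq_true', decide_eq_false_iff_not] at hxnI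
          obtain ⟨I', hI', hxI'⟩ := hmem x hxL
          rcases List.mem_cons.mp hI' with rfl | h'
          · exact absurd hxI' hxnI
          · exact ⟨I', h', hxI'⟩
        have hdisj' : ∀ J ∈ bs', ∀ J' ∈ bs', J = J' ∨ Disjoint (J : Finset ι) J' :=
          fun J hJ J' hJ' => hdisj J (by simp [hJ]) J' (by simp [hJ'])
        obtain ⟨I', hI', hcb⟩ := ih L' hdisj' hmem' hbad'
        have hne : (L'.filter (· ∈ I')) ≠ [] := by
          intro hnil
          rw [hnil] at hcb
          exact hP0 (by simpa using hcb)
        obtain ⟨x, hx⟩ := List.exists_mem_of_ne_nil _ hne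
        have hxI' : x ∈ I' ∧ x ∉ I := by
          rw [List.mem_filter] at hx
          obtain ⟨hx1, hx2⟩ := hx
          rw [hL', List.mem_filter] at hx1
          simp only [Bool.not_eq_true', decide_eq_false_iff_not] at hx1
          simp only [decide_eq_true_eq] at hx2
          exact ⟨hx2, hx1.2⟩
        have hIne : I ≠ I' := fun he => hxI'.2 (he ▸ hxI'.1)
        have hdIJ : Disjoint I I' := (hdisj I (by simp) I' (by simp [hI'])).resolve_left hIne
        have heq : L'.filter (· ∈ I') = L.filter (· ∈ I') := by
          rw [hL', List.filter_filter]
          apply List.filter_congr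
          intro x _
          by_cases hxi : x ∈ I'
          · simp [hxi, Finset.disjoint_right.mp hdIJ hxi]
          · simp [hxi]
        exact ⟨I', by simp [hI'], by rwa [heq] at hcb⟩

-- ===== Part E : descent lemmas =====

lemma descentD (hr : IsPartialOrder ι r) (bs : List (Finset ι)) (θ : ℝ)
    (hdisj : ∀ I ∈ bs, ∀ I' ∈ bs, I = I' ∨ Disjoint (I : Finset ι) I')
    (hneg : ∀ I ∈ bs, ∀ Q : Finset ι, IsIdealIn r I Q → setCost c Q < 0 →
      θ ≤ setBudget r c Q)
    (T : List ι) (hnd : T.Nodup) (hro : RespectsOrder r T)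
    (hmem : ∀ x ∈ T, ∃ I ∈ bs, x ∈ I)
    (hdc : ∀ y ∈ T, ∀ x, (∃ I ∈ bs, x ∈ I) → r x y → x ∈ T) :
    ∀ n, ∀ Ij ∈ bs, θ ≤ listCost c ((T.take n).filter (· ∈ Ij)) →
      θ ≤ listBudget c T := by
  intro n
  induction n using Nat.strong_induction_on with
  | _ n ih =>
    intro Ij hIj hwit
    by_cases h0 : 0 ≤ listCost c ((T.take n).filter (fun x => !decide (x ∈ Ij)))
    · have hsplit := cost_filter_split c (fun x => decide (x ∈ Ij)) (T.take n)
      have hb := cost_take_le_budget c T n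
      linarith
    · push_neg at h0
      set L' := (T.take n).filter (fun x => !decide (x ∈ Ij)) with hL'
      have hmem' : ∀ x ∈ L', ∃ I ∈ bs, x ∈ I := by
        intro x hx
        exact hmem x (List.filter_sublist.mem hx |> (List.take_sublist n T).mem)
      obtain ⟨Il, hIl, hIlneg⟩ := find_block (fun t => t < 0) (by norm_num)
        (fun x y h => by by_contra hc; push_neg at hc; linarith) bs L' hdisj hmem' h0
      -- rewrite the chunk
      have hne : (L'.filter (· ∈ Il)) ≠ [] := by
        intro hnil; rw [hnil] at hIlneg; simp at hIlneg
      obtain ⟨x, hx⟩ := List.exists_mem_of_ne_nil _ hne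
      have hxI : x ∈ Il ∧ x ∉ Ij := by
        rw [List.mem_filter] at hx
        obtain ⟨hx1, hx2⟩ := hx
        rw [hL', List.mem_filter] at hx1
        simp only [Bool.not_eq_true', decide_eq_false_iff_not] at hx1
        simp only [decide_eq_true_eq] at hx2
        exact ⟨hx2, hx1.2⟩
      have hIne : Ij ≠ Il := fun he => hxI.2 (he ▸ hxI.1)
      have hdIJ : Disjoint Ij Il := (hdisj Ij hIj Il hIl).resolve_left hIne
      have heq : L'.filter (· ∈ Il) = (T.take n).filter (· ∈ Il) := by
        rw [hL', List.filter_filter]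
        apply List.filter_congr
        intro y _
        by_cases hyi : y ∈ Il
        · simp [hyi, Finset.disjoint_left.mp hdIJ.symm hyi]
        · simp [hyi]
      rw [heq] at hIlneg
      set W := (T.take n).filter (· ∈ Il) with hW
      have hWnd : W.Nodup := (List.filter_sublist.trans (List.take_sublist n T)).nodup hnd
      have hWresp : RespectsOrder r W :=
        respects_sublist (List.filter_sublist.trans (List.take_sublist n T)) hnd hro
      have hQl : IsIdealIn r Il W.toFinset :=
        chunk_ideal hnd hro Il (fun y hy z hz hrzy => hdc y hy z ⟨Il, hIl, hz⟩ hrzy) n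
      have hWcost : listCost c W = setCost c W.toFinset := listCost_eq_setCost c hWnd
      have hbQ : θ ≤ setBudget r c W.toFinset :=
        hneg Il hIl W.toFinset hQl (by rw [← hWcost]; exact hIlneg)
      have hWfeas : setBudget r c W.toFinset ≤ listBudget c W :=
        setBudget_le c (schedule_toFinset hWnd) hWresp
      obtain ⟨n2, hn2, hWb⟩ := exists_budget_eq_cost_take c W
      rcases eq_or_lt_of_le hn2 with hfull | hlt
      · -- witness is the whole chunk, negative cost: θ < 0
        rw [hfull, List.take_length] at hWb
        have : θ < 0 := by
          calc θ ≤ listBudget c W := le_trans hbQ hWfeas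
          _ = listCost c W := hWb
          _ < 0 := hIlneg
        linarith [listBudget_nonneg c T]
      · obtain ⟨m, hm, hEX, hstrict⟩ := filter_take_ex (fun y => decide (y ∈ Il)) (T.take n) n2
        have hWlen : n2 < ((T.take n).filter (fun y => decide (y ∈ Il))).length := by
          rw [← hW]; exact hlt
        have hmlt : m < (T.take n).length := hstrict hWlen
        have hmn : m < n := lt_of_lt_of_le hmlt (by rw [List.length_take]; omega)
        have htt : (T.take n).take m = T.take m := by
          rw [List.take_take]
          congr 1
          omega
        apply ih m hmn Il hIl
        have : θ ≤ listCost c (W.take n2) := by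
          rw [← hWb]; exact le_trans hbQ hWfeas
        rw [hW] at this
        rw [hEX, htt] at this
        exact this

lemma descentD' (hr : IsPartialOrder ι r) (bs : List (Finset ι)) (θ : ℝ)
    (hdisj : ∀ I ∈ bs, ∀ I' ∈ bs, I = I' ∨ Disjoint (I : Finset ι) I')
    (hpos : ∀ I ∈ bs, ∀ F : Finset ι, IsFilterIn r I F → 0 < setCost c F →
      setCost c F - setBudget r c F ≤ θ)
    (T : List ι) (hnd : T.Nodup) (hro : RespectsOrder r T)
    (hmem : ∀ x ∈ T, ∃ I ∈ bs, x ∈ I)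
    (hup : ∀ y ∈ T, ∀ x, (∃ I ∈ bs, x ∈ I) → r y x → x ∈ T) :
    ∀ d n, T.length - n ≤ d → ∀ Ij ∈ bs,
      listCost c ((T.drop n).filter (· ∈ Ij)) ≤ θ →
      ∃ m, listCost c (T.drop m) ≤ θ := by
  intro d
  induction d with
  | zero =>
      intro n hlen Ij hIj hwit
      have hdrop : T.drop n = [] := by
        apply List.drop_eq_nil_of_le; omega
      refine ⟨n, ?_⟩
      rw [hdrop] at hwit ⊢
      simpa using hwit
  | succ d ihd =>
      intro n hlen Ij hIj hwit
      by_cases h0 : listCost c ((T.drop n).filter (fun x => !decide (x ∈ Ij))) ≤ 0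
      · refine ⟨n, ?_⟩
        have hsplit := cost_filter_split c (fun x => decide (x ∈ Ij)) (T.drop n)
        linarith
      · push_neg at h0
        by_cases hθ : 0 ≤ θ
        · refine ⟨T.length, ?_⟩
          rw [List.drop_length]
          simpa using hθ
        · push_neg at hθ
          set L' := (T.drop n).filter (fun x => !decide (x ∈ Ij)) with hL'
          have hmem' : ∀ x ∈ L', ∃ I ∈ bs, x ∈ I := by
            intro x hx
            exact hmem x (List.filter_sublist.mem hx |> (List.drop_sublist n T).mem)
          obtain ⟨Il, hIl, hIlpos⟩ := find_block (fun t => (0:ℝ) < t) (by norm_num)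
            (fun x y h => by by_contra hc; push_neg at hc; linarith) bs L' hdisj hmem' h0
          have hne : (L'.filter (· ∈ Il)) ≠ [] := by
            intro hnil; rw [hnil] at hIlpos; simp at hIlpos
          obtain ⟨x, hx⟩ := List.exists_mem_of_ne_nil _ hne
          have hxI : x ∈ Il ∧ x ∉ Ij := by
            rw [List.mem_filter] at hx
            obtain ⟨hx1, hx2⟩ := hx
            rw [hL', List.mem_filter] at hx1
            simp only [Bool.not_eq_true', decide_eq_false_iff_not] at hx1
            simp only [decide_eq_true_eq] at hx2
            exact ⟨hx2, hx1.2⟩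
          have hIne : Ij ≠ Il := fun he => hxI.2 (he ▸ hxI.1)
          have hdIJ : Disjoint Ij Il := (hdisj Ij hIj Il hIl).resolve_left hIne
          have heq : L'.filter (· ∈ Il) = (T.drop n).filter (· ∈ Il) := by
            rw [hL', List.filter_filter]
            apply List.filter_congr
            intro y _
            by_cases hyi : y ∈ Il
            · simp [hyi, Finset.disjoint_left.mp hdIJ.symm hyi]
            · simp [hyi]
          rw [heq] at hIlpos
          set W := (T.drop n).filter (· ∈ Il) with hW
          have hWnd : W.Nodup := (List.filter_sublist.trans (List.drop_sublist n T)).nodup hnd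
          have hWresp : RespectsOrder r W :=
            respects_sublist (List.filter_sublist.trans (List.drop_sublist n T)) hnd hro
          have hFl : IsFilterIn r Il W.toFinset :=
            chunk_filter hnd hro Il (fun y hy z hz hrzy => hup y hy z ⟨Il, hIl, hz⟩ hrzy) n
          have hWcost : listCost c W = setCost c W.toFinset := listCost_eq_setCost c hWnd
          have hpos' : setCost c W.toFinset - setBudget r c W.toFinset ≤ θ :=
            hpos Il hIl W.toFinset hFl (by rw [← hWcost]; exact hIlpos)
          have hWfeas : setBudget r c W.toFinset ≤ listBudget c W :=
            setBudget_le c (schedule_toFinset hWnd) hWresp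
          obtain ⟨n2, hn2, hWb⟩ := exists_budget_eq_cost_take c W
          have hdropcost : listCost c (W.drop n2) ≤ θ := by
            have h1 := cost_take_add_drop c W n2
            rw [← hWb] at h1
            have : listCost c (W.drop n2) = listCost c W - listBudget c W := by linarith
            rw [this, hWcost]
            have := hWfeas
            linarith
          -- since θ < 0 and cost W > 0, the dropped suffix is proper : n2 ≥ 1 and W ≠ []
          have hn2pos : 0 < n2 := by
            rcases Nat.eq_zero_or_pos n2 with rfl | h
            · rw [List.drop_zero] at hdropcost; linarith
            · exact h
          have hWne : 0 < W.length := by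
            rcases Nat.eq_zero_or_pos W.length with hzero | h
            · rw [List.length_eq_zero_iff] at hzero; rw [hzero] at hIlpos; simp at hIlpos
            · exact h
          obtain ⟨m2, hm2, hEX, hm2pos⟩ := filter_drop_ex (fun y => decide (y ∈ Il)) (T.drop n) n2
          have hm2pos' : 0 < m2 := hm2pos hn2pos (by rw [← hW]; exact hWne)
          have hdd : (T.drop n).drop m2 = T.drop (n + m2) := by
            rw [List.drop_drop]
          have hnlt : n < T.length := by
            by_contra hc
            push_neg at hc
            have : T.drop n = [] := List.drop_eq_nil_of_le hc
            rw [hW, this] at hIlpos; simp at hIlpos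
          refine ihd (n + m2) (by omega) Il hIl ?_
          rw [← hdd, ← hEX, ← hW]
          exact hdropcost

-- ===== Part F : structure bookkeeping =====

def Struct (r : ι → ι → Prop) (c : ι → ℝ) (N : Finset ι) (SS : List (List ι)) : Prop :=
  IsScheduleOf N SS.flatten ∧ RespectsOrder r SS.flatten ∧
  (∀ S ∈ SS, IsIrreducibleIn r c N S.toFinset ∧
    listBudget c S = setBudget r c S.toFinset) ∧
  SS.Pairwise (fun A B => cbrLE r c A.toFinset B.toFinset)

lemma struct_of_incIrr {N : Finset ι} {SS : List (List ι)}
    (h : IncIrrStructure r c N SS) : Struct r c N SS := by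
  obtain ⟨h1, h2, h3, h4⟩ := h
  exact ⟨h1, h2, fun S hS => ⟨(h3 S hS).1, (h3 S hS).2.2⟩, List.pairwise_iff_get.mpr h4⟩

lemma blocks_eq_or_disjoint {SS : List (List ι)} (hnd : SS.flatten.Nodup) :
    ∀ A ∈ SS, ∀ B ∈ SS, A.toFinset = B.toFinset ∨ Disjoint A.toFinset B.toFinset := by
  have hpw : SS.Pairwise (fun (A B : List ι) => _root_.Disjoint A.toFinset B.toFinset) := by
    induction SS with
    | nil => exact List.Pairwise.nil
    | cons S SS' ih =>
        rw [List.flatten_cons, List.nodup_append'] at hnd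
        refine List.Pairwise.cons ?_ (ih hnd.2.1)
        intro B hB
        rw [Finset.disjoint_left]
        intro a haS haB
        rw [List.mem_toFinset] at haS haB
        exact hnd.2.2 haS (List.mem_flatten.mpr ⟨B, hB, haB⟩)
  intro A hA B hB
  by_cases hAB : A = B
  · exact Or.inl (by rw [hAB])
  · haveI : Std.Symm (fun (A B : List ι) => _root_.Disjoint A.toFinset B.toFinset) :=
      ⟨fun a b h => h.symm⟩
    exact Or.inr (hpw.forall hA hB hAB)

lemma ideal_sdiff {N J K : Finset ι} (h : IsIdealIn r N J) :
    IsIdealIn r (N \ K) (J \ K) := by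
  constructor
  · intro x hx
    rw [Finset.mem_sdiff] at hx ⊢
    exact ⟨h.1 hx.1, hx.2⟩
  · intro j hj i hi hrij
    rw [Finset.mem_sdiff] at hj hi ⊢
    exact ⟨h.2 j hj.1 i hi.1 hrij, hi.2⟩

lemma filterset_sdiff {N F K : Finset ι} (h : IsFilterIn r N F) :
    IsFilterIn r (N \ K) (F \ K) := by
  constructor
  · intro x hx
    rw [Finset.mem_sdiff] at hx ⊢
    exact ⟨h.1 hx.1, hx.2⟩
  · intro i hi j hj hrij
    rw [Finset.mem_sdiff] at hi hj ⊢
    exact ⟨h.2 i hi.1 j hj.1 hrij, hj.2⟩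

lemma interval_sdiff {N I K : Finset ι} (h : IsIntervalIn r N I)
    (hd : Disjoint I K) : IsIntervalIn r (N \ K) I := by
  obtain ⟨J, F, hJ, hF, hIJF⟩ := h
  refine ⟨J \ K, F \ K, ideal_sdiff hJ, filterset_sdiff hF, ?_⟩
  rw [hIJF]
  ext x
  simp only [Finset.mem_inter, Finset.mem_sdiff]
  constructor
  · intro hx
    have hxI : x ∈ I := by rw [hIJF]; exact Finset.mem_inter.mpr hx
    have hxK : x ∉ K := Finset.disjoint_left.mp hd hxI
    exact ⟨⟨hx.1, hxK⟩, hx.2, hxK⟩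
  · intro hx
    exact ⟨hx.1.1, hx.2.1⟩

lemma irr_sdiff {N I K : Finset ι} (h : IsIrreducibleIn r c N I)
    (hd : Disjoint I K) : IsIrreducibleIn r c (N \ K) I :=
  ⟨interval_sdiff h.1 hd, h.2⟩

lemma struct_tail {N : Finset ι} {S1 : List ι} {SS' : List (List ι)}
    (h : Struct r c N (S1 :: SS')) : Struct r c (N \ S1.toFinset) SS' := by
  obtain ⟨⟨hnd, hmem⟩, hresp, hblocks, hpw⟩ := h
  rw [List.flatten_cons] at hnd hmem hresp
  rw [List.nodup_append'] at hnd
  have hdisjS : ∀ S ∈ SS', Disjoint S.toFinset S1.toFinset := by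
    intro S hS
    rw [Finset.disjoint_left]
    intro a haS ha1
    rw [List.mem_toFinset] at haS ha1
    exact hnd.2.2 ha1 (List.mem_flatten.mpr ⟨S, hS, haS⟩)
  refine ⟨⟨hnd.2.1, ?_⟩, ?_, ?_, hpw.of_cons⟩
  · intro j
    rw [Finset.mem_sdiff, List.mem_toFinset]
    constructor
    · intro hj
      refine ⟨(hmem j).mp (List.mem_append_right _ hj), fun hj1 => hnd.2.2 hj1 hj⟩
    · rintro ⟨hjN, hjS1⟩
      rcases List.mem_append.mp ((hmem j).mpr hjN) with h' | h'
      · exact absurd h' hjS1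
      · exact h'
  · exact respects_sublist (List.sublist_append_right S1 SS'.flatten)
      (List.nodup_append'.mpr hnd) hresp
  · intro S hS
    refine ⟨irr_sdiff (hblocks S (List.mem_cons_of_mem _ hS)).1 (hdisjS S hS), 
      (hblocks S (List.mem_cons_of_mem _ hS)).2⟩

lemma struct_dropLast {N : Finset ι} {SS'' : List (List ι)} {Sk : List ι}
    (h : Struct r c N (SS'' ++ [Sk])) : Struct r c (N \ Sk.toFinset) SS'' := by
  obtain ⟨⟨hnd, hmem⟩, hresp, hblocks, hpw⟩ := h
  have hfl : (SS'' ++ [Sk]).flatten = SS''.flatten ++ Sk := by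
    rw [List.flatten_append, List.flatten_cons]
    simp
  rw [hfl] at hnd hmem hresp
  rw [List.nodup_append'] at hnd
  have hdisjS : ∀ S ∈ SS'', Disjoint S.toFinset Sk.toFinset := by
    intro S hS
    rw [Finset.disjoint_left]
    intro a haS hak
    rw [List.mem_toFinset] at haS hak
    exact hnd.2.2 (List.mem_flatten.mpr ⟨S, hS, haS⟩) hak
  refine ⟨⟨hnd.1, ?_⟩, ?_, ?_, (List.pairwise_append.mp hpw).1⟩
  · intro j
    rw [Finset.mem_sdiff, List.mem_toFinset]
    constructor
    · intro hj
      refine ⟨(hmem j).mp (List.mem_append_left _ hj), fun hjk => hnd.2.2 hj hjk⟩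
    · rintro ⟨hjN, hjSk⟩
      rcases List.mem_append.mp ((hmem j).mpr hjN) with h' | h'
      · exact h'
      · exact absurd h' hjSk
  · exact respects_sublist (List.sublist_append_left SS''.flatten Sk)
      (List.nodup_append'.mpr hnd) hresp
  · intro S hS
    refine ⟨irr_sdiff (hblocks S (List.mem_append_left _ hS)).1 (hdisjS S hS),
      (hblocks S (List.mem_append_left _ hS)).2⟩

-- ===== Part G : small assembly helpers =====

lemma exists_chunk_witness (c : ι → ℝ) (T : List ι) (p : ι → Bool) :
    ∃ m, listBudget c (T.filter p) = listCost c ((T.take m).filter p) := by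
  obtain ⟨n2, _, hb⟩ := exists_budget_eq_cost_take c (T.filter p)
  obtain ⟨m, _, hEX, _⟩ := filter_take_ex p T n2
  exact ⟨m, by rw [hb, hEX]⟩

lemma exists_chunk_witness_drop (c : ι → ℝ) (T : List ι) (p : ι → Bool) :
    ∃ m, listCost c (T.filter p) - listBudget c (T.filter p) =
      listCost c ((T.drop m).filter p) := by
  obtain ⟨n2, _, hb⟩ := exists_budget_eq_cost_take c (T.filter p)
  obtain ⟨m, _, hEX, _⟩ := filter_drop_ex p T n2
  refine ⟨m, ?_⟩
  rw [← hEX]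
  have h1 := cost_take_add_drop c (T.filter p) n2
  linarith

lemma listCost_schedule (c : ι → ℝ) {N : Finset ι} {T : List ι}
    (h : IsScheduleOf N T) : listCost c T = setCost c N := by
  rw [listCost_eq_setCost c h.1]
  congr 1
  ext x
  rw [List.mem_toFinset, h.2 x]

lemma filter_not_mem_sdiff (N I : Finset ι) (L : List ι) (hL : ∀ x ∈ L, x ∈ N) :
    L.filter (fun x => !decide (x ∈ N \ I)) = L.filter (fun x => decide (x ∈ I)) := by
  apply List.filter_congr
  intro x hx
  have hxN := hL x hx
  by_cases hxI : x ∈ I <;> simp [Finset.mem_sdiff, hxN, hxI]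

lemma cbr_cases_neg {X Y : Finset ι} (h : cbrLE r c X Y) (hY : setCost c Y < 0) :
    setCost c X < 0 ∧ setBudget r c X ≤ setBudget r c Y := by
  rcases h with h | h | h | h
  · exact absurd h.2 (by linarith)
  · exact ⟨h.1, le_of_lt h.2.2⟩
  · exact ⟨h.1, le_of_eq h.2.2.1⟩
  · exact absurd h.2.1 (by linarith)

lemma cbr_cases_pos {X Y : Finset ι} (h : cbrLE r c X Y) (hX : 0 ≤ setCost c X) :
    0 ≤ setCost c Y ∧ setReturn r c X ≤ setReturn r c Y := by
  rcases h with h | h | h | h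
  · exact absurd h.1 (by linarith)
  · exact absurd h.1 (by linarith)
  · exact absurd h.1 (by linarith)
  · exact ⟨h.2.1, h.2.2⟩

-- ===== Part H : main induction =====

lemma main_le (hr : IsPartialOrder ι r) :
    ∀ (k : ℕ) (N : Finset ι) (SS : List (List ι)),
    N.card + SS.length ≤ k → Struct r c N SS →
    ∀ T, IsScheduleOf N T → RespectsOrder r T →
    listBudget c SS.flatten ≤ listBudget c T := by
  intro k
  induction k with
  | zero =>
      intro N SS hk hS T hT1 hT2
      have hSS : SS = [] := by
        cases SS with
        | nil => rfl
        | cons a l => simp at hk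
      subst hSS
      simpa using listBudget_nonneg c T
  | succ k ihk =>
      intro N SS hk hS T hT1 hT2
      cases SS with
      | nil => simpa using listBudget_nonneg c T
      | cons S1 SS' =>
        obtain ⟨⟨hndF, hmemF⟩, hrespF, hblocks, hpw⟩ := hS
        have hndF2 := hndF
        rw [List.flatten_cons, List.nodup_append'] at hndF2
        have hS1nd : S1.Nodup := hndF2.1
        have hsub : ∀ S ∈ (S1 :: SS'), (S.toFinset : Finset ι) ⊆ N := by
          intro S hS x hx
          rw [List.mem_toFinset] at hx
          exact (hmemF x).mp (List.mem_flatten.mpr ⟨S, hS, hx⟩)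
        set bs := (S1 :: SS').map List.toFinset with hbs
        have hbsdisj : ∀ I ∈ bs, ∀ I' ∈ bs, I = I' ∨ Disjoint I I' := by
          intro I hI I' hI'
          rw [hbs, List.mem_map] at hI hI'
          obtain ⟨A, hA, rfl⟩ := hI
          obtain ⟨B, hB, rfl⟩ := hI'
          exact blocks_eq_or_disjoint hndF A hA B hB
        have hbsmem : ∀ x ∈ T, ∃ I ∈ bs, x ∈ I := by
          intro x hx
          have hxf := (hmemF x).mpr ((hT1.2 x).mp hx)
          obtain ⟨S, hSmem, hxS⟩ := List.mem_flatten.mp hxf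
          exact ⟨S.toFinset, by rw [hbs]; exact List.mem_map_of_mem hSmem,
            List.mem_toFinset.mpr hxS⟩
        have hdcT : ∀ y ∈ T, ∀ x, (∃ I ∈ bs, x ∈ I) → r x y → x ∈ T := by
          intro y _ x hxI _
          obtain ⟨I, hI, hxI'⟩ := hxI
          rw [hbs, List.mem_map] at hI
          obtain ⟨S, hSmem, rfl⟩ := hI
          exact (hT1.2 x).mpr (hsub S hSmem hxI')
        have hreassemble : Struct r c N (S1 :: SS') := ⟨⟨hndF, hmemF⟩, hrespF, hblocks, hpw⟩
        by_cases hc1 : setCost c S1.toFinset < 0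
        · -- ===== Case A : negative first block, peel front =====
          set I1 := S1.toFinset with hI1
          have hS1mem : S1 ∈ (S1 :: SS') := List.mem_cons_self
          have hS1opt := (hblocks S1 hS1mem).2
          have hirr1 := (hblocks S1 hS1mem).1.2
          have hI1bs : I1 ∈ bs := by rw [hbs]; exact List.mem_map_of_mem hS1mem
          have hI1sub : I1 ⊆ N := hsub S1 hS1mem
          -- (α) : setBudget I1 ≤ budget T, via primal descent
          have halpha : setBudget r c I1 ≤ listBudget c T := by
            set W1 := T.filter (fun x => decide (x ∈ I1)) with hW1
            have hW1sched : IsScheduleOf I1 W1 := schedule_of_filter hT1 I1 hI1sub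
            have hW1resp : RespectsOrder r W1 :=
              respects_sublist List.filter_sublist hT1.1 hT2
            have hble : setBudget r c I1 ≤ listBudget c W1 :=
              setBudget_le c hW1sched hW1resp
            obtain ⟨m, hm⟩ := exists_chunk_witness c T (fun x => decide (x ∈ I1))
            refine descentD hr bs (setBudget r c I1) hbsdisj ?_ T hT1.1 hT2 hbsmem hdcT
              m I1 hI1bs ?_
            · intro I hI Q hQ hQneg
              rw [hbs, List.mem_map] at hI
              obtain ⟨S, hSmem, rfl⟩ := hI
              have hcbrIQ := (hblocks S hSmem).1.2 Q hQ
              obtain ⟨hcS, hbSQ⟩ := cbr_cases_neg hcbrIQ hQneg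
              rcases List.mem_cons.mp hSmem with rfl | hSmem'
              · exact hbSQ
              · have hcbr1S := (List.pairwise_cons.mp hpw).1 S hSmem'
                obtain ⟨_, hb1S⟩ := cbr_cases_neg hcbr1S hcS
                exact le_trans hb1S hbSQ
            · rw [← hm, ← hW1]
              exact hble
          -- (β) : setCost I1 + setBudget (N \ I1) ≤ budget T
          have hbeta : setCost c I1 + setBudget r c (N \ I1) ≤ listBudget c T := by
            set V := T.filter (fun x => decide (x ∈ N \ I1)) with hV
            have hVsched : IsScheduleOf (N \ I1) V :=
              schedule_of_filter hT1 _ Finset.sdiff_subset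
            have hVresp : RespectsOrder r V :=
              respects_sublist List.filter_sublist hT1.1 hT2
            have hble : setBudget r c (N \ I1) ≤ listBudget c V :=
              setBudget_le c hVsched hVresp
            obtain ⟨m, hm⟩ := exists_chunk_witness c T (fun x => decide (x ∈ N \ I1))
            have hsplit := cost_filter_split c (fun x => decide (x ∈ N \ I1)) (T.take m)
            have hcongr : (T.take m).filter (fun x => !decide (x ∈ N \ I1)) =
                (T.take m).filter (fun x => decide (x ∈ I1)) :=
              filter_not_mem_sdiff N I1 _
                (fun x hx => (hT1.2 x).mp ((List.take_sublist m T).mem hx))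
            have hchunkid : IsIdealIn r I1
                (((T.take m).filter (fun x => decide (x ∈ I1))).toFinset) :=
              chunk_ideal hT1.1 hT2 I1 (fun y _ x hx _ => (hT1.2 x).mpr (hI1sub hx)) m
            have hchunknd : ((T.take m).filter (fun x => decide (x ∈ I1))).Nodup :=
              (List.filter_sublist.trans (List.take_sublist m T)).nodup hT1.1
            have hN1 := N1 hr hirr1 hc1 hchunkid
            rw [← listCost_eq_setCost c hchunknd] at hN1
            have hbT := cost_take_le_budget c T m
            rw [hcongr] at hsplit
            linarith
          -- recursion on the tail
          have hstruct' : Struct r c (N \ I1) SS' := struct_tail hreassemble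
          have hI1ne : I1.Nonempty := by
            rw [Finset.nonempty_iff_ne_empty]
            intro h
            rw [h] at hc1
            simp [setCost] at hc1
          have hcard' : (N \ I1).card + SS'.length ≤ k := by
            have h1 := Finset.card_sdiff_of_subset hI1sub
            have h2 : 1 ≤ I1.card := Finset.card_pos.mpr hI1ne
            have h3 : I1.card ≤ N.card := Finset.card_le_card hI1sub
            simp only [List.length_cons] at hk
            omega
          have hrest : listBudget c SS'.flatten ≤ setBudget r c (N \ I1) := by
            refine le_csInf (budgetsOf_nonempty hr c _) ?_
            rintro b ⟨S, hs1, hs2, rfl⟩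
            exact ihk (N \ I1) SS' hcard' hstruct' S hs1 hs2
          rw [List.flatten_cons, listBudget_append]
          apply max_le
          · rw [hS1opt]
            exact halpha
          · have hc : listCost c S1 = setCost c I1 := listCost_eq_setCost c hS1nd
            linarith
        · -- ===== Case B : nonnegative first block, peel back =====
          push_neg at hc1
          have hposall : ∀ S ∈ (S1 :: SS'), 0 ≤ setCost c S.toFinset := by
            intro S hS
            rcases List.mem_cons.mp hS with rfl | hS'
            · exact hc1
            · exact (cbr_cases_pos ((List.pairwise_cons.mp hpw).1 S hS') hc1).1
          have hne0 : (S1 :: SS') ≠ [] := List.cons_ne_nil _ _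
          set Sk := (S1 :: SS').getLast hne0 with hSk
          set SS'' := (S1 :: SS').dropLast with hSS''
          have hdec : SS'' ++ [Sk] = S1 :: SS' := List.dropLast_append_getLast hne0
          have hSkmem : Sk ∈ (S1 :: SS') := List.getLast_mem hne0
          have hlen'' : SS''.length = SS'.length := by
            rw [hSS'', List.length_dropLast, List.length_cons]
            omega
          by_cases hSkemp : Sk.toFinset = ∅
          · -- ===== empty last block =====
            have hSknil : Sk = [] := by
              cases hSkc : Sk with
              | nil => rfl
              | cons a t =>
                  exfalso
                  apply Finset.notMem_empty a
                  rw [← hSkemp, hSkc]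
                  simp
            have hstruct'' : Struct r c N SS'' := by
              have h := struct_dropLast (show Struct r c N (SS'' ++ [Sk]) by
                rw [hdec]; exact hreassemble)
              rwa [hSkemp, Finset.sdiff_empty] at h
            have hflat : (S1 :: SS').flatten = SS''.flatten := by
              conv_lhs => rw [← hdec]
              rw [List.flatten_append, hSknil]
              simp
            have hcard'' : N.card + SS''.length ≤ k := by
              rw [hlen'']
              simp only [List.length_cons] at hk
              omega
            rw [hflat]
            exact ihk N SS'' hcard'' hstruct'' T hT1 hT2
          · -- ===== main case B =====
            set Ik := Sk.toFinset with hIk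
            have hIkne : Ik.Nonempty := Finset.nonempty_iff_ne_empty.mpr hSkemp
            have hstruct'' : Struct r c (N \ Ik) SS'' :=
              struct_dropLast (by rw [hdec]; exact hreassemble)
            have hIksub : Ik ⊆ N := hsub Sk hSkmem
            have hIkbs : Ik ∈ bs := by rw [hbs]; exact List.mem_map_of_mem hSkmem
            have hcardB : (N \ Ik).card + SS''.length ≤ k := by
              have h1 := Finset.card_sdiff_of_subset hIksub
              have h2 : 1 ≤ Ik.card := Finset.card_pos.mpr hIkne
              have h3 : Ik.card ≤ N.card := Finset.card_le_card hIksub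
              rw [hlen'']
              simp only [List.length_cons] at hk
              omega
            have hpw' : (SS'' ++ [Sk]).Pairwise
                (fun A B => cbrLE r c A.toFinset B.toFinset) := by
              rw [hdec]; exact hpw
            have hretk : ∀ S ∈ (S1 :: SS'),
                setCost c S.toFinset - setBudget r c S.toFinset ≤
                setCost c Ik - setBudget r c Ik := by
              intro S hS
              rcases List.mem_append.mp (show S ∈ SS'' ++ [Sk] by rw [hdec]; exact hS)
                with hS'' | hlast
              · have hcbr := (List.pairwise_append.mp hpw').2.2 S hS'' Sk (by simp)
                have h2 := (cbr_cases_pos hcbr (hposall S hS)).2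
                simpa [setReturn] using h2
              · have hSSk : S = Sk := by simpa using hlast
                rw [hSSk]
            -- (α-back) : budget of dropLast flatten ≤ budget T
            have halphaB : listBudget c SS''.flatten ≤ listBudget c T := by
              set V := T.filter (fun x => decide (x ∈ N \ Ik)) with hV
              have hVsched : IsScheduleOf (N \ Ik) V :=
                schedule_of_filter hT1 _ Finset.sdiff_subset
              have hVresp : RespectsOrder r V :=
                respects_sublist List.filter_sublist hT1.1 hT2
              have hIH : listBudget c SS''.flatten ≤ listBudget c V :=
                ihk (N \ Ik) SS'' hcardB hstruct'' V hVsched hVresp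
              obtain ⟨m, hm⟩ := exists_chunk_witness c T (fun x => decide (x ∈ N \ Ik))
              have hsplit := cost_filter_split c (fun x => decide (x ∈ N \ Ik)) (T.take m)
              have hcongr : (T.take m).filter (fun x => !decide (x ∈ N \ Ik)) =
                  (T.take m).filter (fun x => decide (x ∈ Ik)) :=
                filter_not_mem_sdiff N Ik _
                  (fun x hx => (hT1.2 x).mp ((List.take_sublist m T).mem hx))
              have hchunkid : IsIdealIn r Ik
                  (((T.take m).filter (fun x => decide (x ∈ Ik))).toFinset) :=
                chunk_ideal hT1.1 hT2 Ik (fun y _ x hx _ => (hT1.2 x).mpr (hIksub hx)) m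
              have hchunknd : ((T.take m).filter (fun x => decide (x ∈ Ik))).Nodup :=
                (List.filter_sublist.trans (List.take_sublist m T)).nodup hT1.1
              have hchunknn : 0 ≤ listCost c ((T.take m).filter (fun x => decide (x ∈ Ik))) := by
                rw [listCost_eq_setCost c hchunknd]
                exact P1 (hblocks Sk hSkmem).1.2 (hposall Sk hSkmem) hchunkid
              have hbT := cost_take_le_budget c T m
              rw [hcongr] at hsplit
              rw [← hV] at hm
              linarith
            -- (β-back) : cost of dropLast + budget Sk ≤ budget T, via dual descent
            have hbetaB : listCost c SS''.flatten + listBudget c Sk ≤ listBudget c T := by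
              set θ' := setCost c Ik - setBudget r c Ik with hθ'
              have hposD : ∀ I ∈ bs, ∀ F : Finset ι, IsFilterIn r I F → 0 < setCost c F →
                  setCost c F - setBudget r c F ≤ θ' := by
                intro I hI F hF hcF
                rw [hbs, List.mem_map] at hI
                obtain ⟨S, hSmem, rfl⟩ := hI
                have h1 := F1 hr (hblocks S hSmem).1.2 (hposall S hSmem) hF hcF
                exact le_trans h1 (hretk S hSmem)
              set Wk := T.filter (fun x => decide (x ∈ Ik)) with hWk
              have hWksched : IsScheduleOf Ik Wk := schedule_of_filter hT1 Ik hIksub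
              have hWkresp : RespectsOrder r Wk :=
                respects_sublist List.filter_sublist hT1.1 hT2
              have hWkb : setBudget r c Ik ≤ listBudget c Wk :=
                setBudget_le c hWksched hWkresp
              have hWkcost : listCost c Wk = setCost c Ik := listCost_schedule c hWksched
              obtain ⟨m, hm⟩ := exists_chunk_witness_drop c T (fun x => decide (x ∈ Ik))
              rw [← hWk] at hm
              have hwit : listCost c ((T.drop m).filter (fun x => decide (x ∈ Ik))) ≤ θ' := by
                rw [← hm, hWkcost, hθ']
                linarith
              obtain ⟨m', hm'⟩ := descentD' hr bs θ' hbsdisj hposD T hT1.1 hT2 hbsmem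
                (fun y _ x hxI _ => by
                  obtain ⟨I, hI, hxI'⟩ := hxI
                  rw [hbs, List.mem_map] at hI
                  obtain ⟨S, hSmem, rfl⟩ := hI
                  exact (hT1.2 x).mpr (hsub S hSmem hxI'))
                T.length m (by omega) Ik hIkbs hwit
              have h1 := cost_take_add_drop c T m'
              have h2 := cost_take_le_budget c T m'
              have hcostT : listCost c T = setCost c N := listCost_schedule c hT1
              have hcostsplit : setCost c (N \ Ik) + setCost c Ik = setCost c N := by
                simpa [setCost] using Finset.sum_sdiff (f := c) hIksub
              have hcostSS'' : listCost c SS''.flatten = setCost c (N \ Ik) :=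
                listCost_schedule c hstruct''.1
              have hSkopt : listBudget c Sk = setBudget r c Ik := (hblocks Sk hSkmem).2
              rw [hcostSS'', hSkopt]
              linarith
            have hflat2 : (S1 :: SS').flatten = SS''.flatten ++ Sk := by
              conv_lhs => rw [← hdec]
              rw [List.flatten_append, List.flatten_cons]
              simp
            rw [hflat2, listBudget_append]
            exact max_le halphaB hbetaB

end IncIrrAux

theorem incIrr_optimal (r : ι → ι → Prop) (hr : IsPartialOrder ι r)
    (c : ι → ℝ) (N : Finset ι) (SS : List (List ι))
    (h : IncIrrStructure r c N SS) :
    listBudget c SS.flatten = setBudget r c N := by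
  have hstruct := IncIrrAux.struct_of_incIrr h
  obtain ⟨h1, h2, _, _⟩ := hstruct
  apply _root_.le_antisymm
  · refine le_csInf (IncIrrAux.budgetsOf_nonempty hr c N) ?_
    rintro b ⟨S, hs1, hs2, rfl⟩
    exact IncIrrAux.main_le hr (N.card + SS.length) N SS le_rfl
      (IncIrrAux.struct_of_incIrr h) S hs1 hs2
  · exact IncIrrAux.setBudget_le c h1 h2
end
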